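/- arXiv:2404.15917 — 7 statements merged into one kernel-verified Lean document; each statement's English description precedes it below -/
import Mathlib

section
/- Let I be a finite set, let w, h : I → ℕ assign to each element a positive width and positive height, and let W, m ∈ ℕ be positive. Then the Demand Strip Packing instance (I, w, h, W) admits a packing with peak height at most m if and only if the Parallel Task Scheduling instance with job set I, processing times p = w, machine requirements q = h, and m machines admits a feasible schedule with makespan at most W. -/
open Finset

/-- Auxiliary: greedy machine assignment for items in a finset `s`. -/
lemma dsp_assign {I : Type*} [Fintype I] [DecidableEq I] (w h : I → ℕ)
    (hw : ∀ i, 0 < w i) (W m : ℕ) (lam : I → ℕ)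
    (hfit : ∀ i, lam i + w i ≤ W)
    (hpeak : ∀ k, k < W →
      (∑ i ∈ Finset.univ.filter (fun i => lam i ≤ k ∧ k < lam i + w i), h i) ≤ m) :
    ∀ s : Finset I, ∃ ρ : I → Finset (Fin m),
      (∀ j ∈ s, (ρ j).card = h j) ∧
      (∀ j ∈ s, ∀ j' ∈ s, j ≠ j' → lam j < lam j' + w j' → lam j' < lam j + w j →
        Disjoint (ρ j) (ρ j')) := by
  intro s
  induction s using Finset.strongInduction with
  | _ s ih =>
    rcases s.eq_empty_or_nonempty with rfl | hs
    · exact ⟨fun _ => ∅, by simp, by simp⟩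
    obtain ⟨i, hi, hmax⟩ := s.exists_max_image lam hs
    obtain ⟨ρ, hcard, hdisj⟩ := ih (s.erase i) (Finset.erase_ssubset hi)
    set T : Finset I :=
      (s.erase i).filter (fun j => lam j < lam i + w i ∧ lam i < lam j + w j) with hT
    have hkW : lam i < W := lt_of_lt_of_le (Nat.lt_add_of_pos_right (hw i)) (hfit i)
    have hsum : (∑ j ∈ T, h j) + h i ≤ m := by
      have hsub : insert i T ⊆
          Finset.univ.filter (fun j => lam j ≤ lam i ∧ lam i < lam j + w j) := by
        intro j hj
        rcases Finset.mem_insert.mp hj with rfl | hj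
        · simp [Nat.lt_add_of_pos_right (hw j)]
        · rw [hT, Finset.mem_filter] at hj
          have hjs : j ∈ s := Finset.mem_of_mem_erase hj.1
          exact Finset.mem_filter.mpr ⟨Finset.mem_univ j, hmax j hjs, hj.2.2⟩
      have hiT : i ∉ T := by
        rw [hT]
        intro hiT
        exact (Finset.notMem_erase i s) (Finset.mem_of_mem_filter _ hiT)
      calc (∑ j ∈ T, h j) + h i = ∑ j ∈ insert i T, h j := by
            rw [Finset.sum_insert hiT]; ring
        _ ≤ _ := Finset.sum_le_sum_of_subset hsub
        _ ≤ m := hpeak (lam i) hkW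
    set Used : Finset (Fin m) := T.biUnion ρ with hU
    have hUcard : Used.card ≤ ∑ j ∈ T, h j := by
      calc Used.card ≤ ∑ j ∈ T, (ρ j).card := Finset.card_biUnion_le
        _ = ∑ j ∈ T, h j := Finset.sum_congr rfl
            (fun j hj => hcard j (Finset.mem_of_mem_filter _ hj))
    have hfree : h i ≤ Usedᶜ.card := by
      rw [Finset.card_compl, Fintype.card_fin]
      omega
    obtain ⟨S, hSsub, hScard⟩ := Finset.exists_subset_card_eq hfree
    refine ⟨Function.update ρ i S, ?_, ?_⟩
    · intro j hj
      rcases eq_or_ne j i with rfl | hne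
      · simp [hScard]
      · rw [Function.update_of_ne hne]
        exact hcard j (Finset.mem_erase.mpr ⟨hne, hj⟩)
    · intro j hj j' hj' hne hov1 hov2
      have mem_T : ∀ a ∈ s, a ≠ i → lam a < lam i + w i → lam i < lam a + w a → a ∈ T := by
        intro a ha hani h1 h2
        exact Finset.mem_filter.mpr ⟨Finset.mem_erase.mpr ⟨hani, ha⟩, h1, h2⟩
      have sub_used : ∀ a ∈ T, ρ a ⊆ Used := fun a ha => Finset.subset_biUnion_of_mem ρ ha
      rcases eq_or_ne j i with rfl | hjne
      · rw [Function.update_self, Function.update_of_ne (Ne.symm hne)]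
        have hj'T : j' ∈ T := mem_T j' hj' (Ne.symm hne) hov2 hov1
        exact Finset.disjoint_left.mpr fun x hxS hxρ =>
          (Finset.mem_compl.mp (hSsub hxS)) (sub_used j' hj'T hxρ)
      · rw [Function.update_of_ne hjne]
        rcases eq_or_ne j' i with rfl | hj'ne
        · rw [Function.update_self]
          have hjT : j ∈ T := mem_T j hj hjne hov1 hov2
          exact Finset.disjoint_right.mpr fun x hxS hxρ =>
            (Finset.mem_compl.mp (hSsub hxS)) (sub_used j hjT hxρ)
        · rw [Function.update_of_ne hj'ne]
          exact hdisj j (Finset.mem_erase.mpr ⟨hjne, hj⟩)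
            j' (Finset.mem_erase.mpr ⟨hj'ne, hj'⟩) hne hov1 hov2

/-- **Equivalence of Demand Strip Packing and Parallel Task Scheduling.**
A DSP instance `(I, w, h, W)` admits a packing with peak height at most `m`
iff the PTS instance with jobs `I`, processing times `p = w`, machine
requirements `q = h`, and `m` machines admits a feasible schedule with
makespan at most `W`. -/
theorem dsp_packing_iff_pts_schedule
    (I : Type*) [Fintype I] (w h : I → ℕ)
    (hw : ∀ i, 0 < w i) (hh : ∀ i, 0 < h i)
    (W m : ℕ) (hW : 0 < W) (hm : 0 < m) :
    (∃ lam : I → ℕ,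
        (∀ i, lam i + w i ≤ W) ∧
        ∀ k, k < W →
          (∑ i ∈ Finset.univ.filter (fun i => lam i ≤ k ∧ k < lam i + w i), h i) ≤ m)
    ↔
    (∃ (σ : I → ℕ) (ρ : I → Finset (Fin m)),
        (∀ j, σ j + w j ≤ W) ∧
        (∀ j, (ρ j).card = h j) ∧
        ∀ j j', j ≠ j' → σ j < σ j' + w j' → σ j' < σ j + w j →
          Disjoint (ρ j) (ρ j')) := by
  classical
  constructor
  · rintro ⟨lam, hfit, hpeak⟩
    obtain ⟨ρ, hcard, hdisj⟩ :=
      dsp_assign w h hw W m lam hfit hpeak Finset.univ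
    exact ⟨lam, ρ, hfit, fun j => hcard j (Finset.mem_univ j),
      fun j j' hne h1 h2 =>
        hdisj j (Finset.mem_univ j) j' (Finset.mem_univ j') hne h1 h2⟩
  · rintro ⟨σ, ρ, hfit, hcard, hdisj⟩
    refine ⟨σ, hfit, fun k hk => ?_⟩
    set A := Finset.univ.filter (fun i => σ i ≤ k ∧ k < σ i + w i) with hA
    have hpd : ∀ j ∈ A, ∀ j' ∈ A, j ≠ j' → Disjoint (ρ j) (ρ j') := by
      intro j hj j' hj' hne
      rw [hA, Finset.mem_filter] at hj hj'
      exact hdisj j j' hne (lt_of_le_of_lt hj.2.1 hj'.2.2)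
        (lt_of_le_of_lt hj'.2.1 hj.2.2)
    calc (∑ i ∈ A, h i) = ∑ i ∈ A, (ρ i).card :=
          Finset.sum_congr rfl (fun i _ => (hcard i).symm)
      _ = (A.biUnion ρ).card := (Finset.card_biUnion hpd).symm
      _ ≤ Fintype.card (Fin m) := Finset.card_le_univ _
      _ = m := Fintype.card_fin m
end

section
/- Let J be a finite set, σ : J → ℕ, and let p, q : J → ℕ take positive values; let m ∈ ℕ. If for every t ∈ ℕ the total requirement Σ_{j : σ(j) ≤ t < σ(j)+p(j)} q(j) is at most m, then there exists ρ : J → Finset (Fin m) such that |ρ(j)| = q(j) for all j and ρ(j) ∩ ρ(j') = ∅ whenever j ≠ j' and the time intervals [σ(j), σ(j)+p(j)) and [σ(j'), σ(j')+p(j')) intersect. -/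
/-- **Conflict-free machine assignment for capacity-feasible start times.**
If jobs `j` run during `[σ j, σ j + p j)`, require `q j` machines each, and at every
time `t` the total requirement of running jobs is at most `m`, then there is an
assignment of machine sets `ρ j ⊆ Fin m` with `|ρ j| = q j` such that jobs whose
time intervals intersect receive disjoint machine sets. -/
theorem machine_assignment_exists
    (J : Type*) [Fintype J] (σ p q : J → ℕ)
    (hp : ∀ j, 0 < p j) (hq : ∀ j, 0 < q j) (m : ℕ)
    (hcap : ∀ t : ℕ,
      (∑ j ∈ Finset.univ.filter (fun j => σ j ≤ t ∧ t < σ j + p j), q j) ≤ m) :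
    ∃ ρ : J → Finset (Fin m),
      (∀ j, (ρ j).card = q j) ∧
      ∀ j j', j ≠ j' → σ j < σ j' + p j' → σ j' < σ j + p j →
        Disjoint (ρ j) (ρ j') := by
  classical
  suffices h : ∀ S : Finset J, ∃ ρ : J → Finset (Fin m),
      (∀ j ∈ S, (ρ j).card = q j) ∧
      ∀ j ∈ S, ∀ j' ∈ S, j ≠ j' → σ j < σ j' + p j' → σ j' < σ j + p j →
        Disjoint (ρ j) (ρ j') by
    obtain ⟨ρ, h1, h2⟩ := h Finset.univ
    exact ⟨ρ, fun j => h1 j (Finset.mem_univ j),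
      fun j j' hne ha hb => h2 j (Finset.mem_univ j) j' (Finset.mem_univ j') hne ha hb⟩
  intro S
  induction S using Finset.strongInductionOn with
  | _ S ih =>
  rcases S.eq_empty_or_nonempty with rfl | hS
  · exact ⟨fun _ => ∅, by simp, by simp⟩
  obtain ⟨j0, hj0S, hmax⟩ := S.exists_max_image σ hS
  obtain ⟨ρ', h1', h2'⟩ := ih (S.erase j0) (Finset.erase_ssubset hj0S)
  set T := (S.erase j0).filter (fun j => σ j0 < σ j + p j) with hT
  set Used := T.biUnion ρ' with hU
  have hsub : insert j0 T ⊆ Finset.univ.filter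
      (fun j => σ j ≤ σ j0 ∧ σ j0 < σ j + p j) := by
    intro j hj
    simp only [Finset.mem_insert, hT, Finset.mem_filter, Finset.mem_erase] at hj ⊢
    rcases hj with rfl | ⟨⟨hne, hjS⟩, hact⟩
    · exact ⟨Finset.mem_univ _, le_refl _, by have := hp j; omega⟩
    · exact ⟨Finset.mem_univ _, hmax j hjS, hact⟩
  have hj0T : j0 ∉ T := by simp [hT]
  have hsum : q j0 + (∑ j ∈ T, q j) ≤ m := by
    have h1 := Finset.sum_le_sum_of_subset (f := q) hsub
    rw [Finset.sum_insert hj0T] at h1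
    have h2 := hcap (σ j0)
    omega
  have hcardU : Used.card ≤ ∑ j ∈ T, q j := by
    calc Used.card ≤ ∑ j ∈ T, (ρ' j).card := Finset.card_biUnion_le
      _ = ∑ j ∈ T, q j := Finset.sum_congr rfl (fun j hj => by
          refine h1' j ?_
          simp only [hT, Finset.mem_filter] at hj
          exact hj.1)
  have hfree : q j0 ≤ Usedᶜ.card := by
    have : Usedᶜ.card = m - Used.card := by
      rw [Finset.card_compl]; simp
    omega
  obtain ⟨B, hBsub, hBcard⟩ := Finset.exists_subset_card_eq hfree
  refine ⟨Function.update ρ' j0 B, ?_, ?_⟩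
  · intro j hj
    by_cases hje : j = j0
    · subst hje; simp [hBcard]
    · rw [Function.update_of_ne hje]
      exact h1' j (Finset.mem_erase.mpr ⟨hje, hj⟩)
  · intro j hj j' hj' hne ho1 ho2
    have key : ∀ j' ∈ S, j' ≠ j0 → σ j0 < σ j' + p j' →
        Disjoint B (ρ' j') := by
      intro k hk hkne hact
      have hkT : k ∈ T := by
        simp only [hT, Finset.mem_filter, Finset.mem_erase]
        exact ⟨⟨hkne, hk⟩, hact⟩
      exact disjoint_compl_left.mono hBsub (Finset.subset_biUnion_of_mem ρ' hkT)
    by_cases hje : j = j0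
    · have hj'ne : j' ≠ j0 := fun h => hne (hje.trans h.symm)
      rw [hje, Function.update_self, Function.update_of_ne hj'ne]
      exact key j' hj' hj'ne (hje ▸ ho1)
    · by_cases hj'e : j' = j0
      · rw [hj'e, Function.update_self, Function.update_of_ne hje]
        exact (key j hj hje (hj'e ▸ ho2)).symm
      · rw [Function.update_of_ne hje, Function.update_of_ne hj'e]
        exact h2' j (Finset.mem_erase.mpr ⟨hje, hj⟩) j'
          (Finset.mem_erase.mpr ⟨hj'e, hj'⟩) hne ho1 ho2
end

section
/- Let J be a finite set of jobs, each job j with start time s(j) ∈ ℕ and finish time e(j) ∈ ℕ satisfying s(j) < e(j), and with machine requirement q(j) ∈ {1, 2, 3}. Suppose that for every t ∈ ℕ we have Σ_{j : s(j) ≤ t < e(j)} q(j) ≤ 3. Then there exists an assignment ρ : J → Finset (Fin 3) such that |ρ(j)| = q(j) for every j, the middle machine (index 1) belongs to ρ(j) whenever q(j) ≥ 2, and ρ(j) ∩ ρ(j') = ∅ whenever j ≠ j' and the time intervals [s(j), e(j)) and [s(j'), e(j')) intersect. -/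
open Finset
open scoped Classical

namespace ThreeMachineAux
variable {J : Type*} [Fintype J]

/-- Total machine requirement of jobs running at time `t`. -/
noncomputable def load (s e q : J → ℕ) (t : ℕ) : ℕ :=
  ∑ j ∈ Finset.univ.filter (fun j => s j ≤ t ∧ t < e j), q j

/-- Number of width-1 jobs running at time `t`. -/
noncomputable def cnt (s e q : J → ℕ) (t : ℕ) : ℕ :=
  (Finset.univ.filter (fun j => q j = 1 ∧ s j ≤ t ∧ t < e j)).card

variable (s e q : J → ℕ)

lemma cnt_le_load (t : ℕ) : cnt s e q t ≤ load s e q t := by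
  classical
  have h1 : cnt s e q t =
      ∑ j ∈ Finset.univ.filter (fun j => q j = 1 ∧ s j ≤ t ∧ t < e j), q j := by
    rw [cnt, card_eq_sum_ones]
    exact Finset.sum_congr rfl (fun j hj => ((mem_filter.mp hj).2.1).symm)
  rw [h1, load]
  apply Finset.sum_le_sum_of_subset
  intro x hx
  rw [mem_filter] at hx ⊢
  exact ⟨hx.1, hx.2.2⟩

lemma pair_le_load {j j' : J} {t : ℕ} (hne : j ≠ j')
    (h1 : s j ≤ t ∧ t < e j) (h2 : s j' ≤ t ∧ t < e j') :
    q j + q j' ≤ load s e q t := by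
  classical
  have hsub : ({j, j'} : Finset J) ⊆
      Finset.univ.filter (fun x => s x ≤ t ∧ t < e x) := by
    intro x hx
    rcases mem_insert.mp hx with rfl | hx
    · exact mem_filter.mpr ⟨mem_univ _, h1⟩
    · rcases mem_singleton.mp hx with rfl
      exact mem_filter.mpr ⟨mem_univ _, h2⟩
  calc q j + q j' = ∑ x ∈ ({j, j'} : Finset J), q x := (Finset.sum_pair hne).symm
    _ ≤ load s e q t := Finset.sum_le_sum_of_subset hsub

/-- A wide job running together with `cnt` width-1 jobs contributes `q w + cnt`. -/
lemma wide_add_cnt_le_load {w : J} {t : ℕ} (hw : 2 ≤ q w)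
    (hrun : s w ≤ t ∧ t < e w) : q w + cnt s e q t ≤ load s e q t := by
  classical
  have hnotmem : w ∉ Finset.univ.filter (fun j => q j = 1 ∧ s j ≤ t ∧ t < e j) := by
    intro hcon
    have := (mem_filter.mp hcon).2.1
    omega
  have hcnt : cnt s e q t =
      ∑ j ∈ Finset.univ.filter (fun j => q j = 1 ∧ s j ≤ t ∧ t < e j), q j := by
    rw [cnt, card_eq_sum_ones]
    exact Finset.sum_congr rfl (fun j hj => ((mem_filter.mp hj).2.1).symm)
  have hsub : insert w (Finset.univ.filter (fun j => q j = 1 ∧ s j ≤ t ∧ t < e j)) ⊆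
      Finset.univ.filter (fun j => s j ≤ t ∧ t < e j) := by
    intro x hx
    rcases mem_insert.mp hx with rfl | hx
    · exact mem_filter.mpr ⟨mem_univ _, hrun⟩
    · rw [mem_filter] at hx ⊢
      exact ⟨hx.1, hx.2.2⟩
  calc q w + cnt s e q t
      = ∑ j ∈ insert w (Finset.univ.filter (fun j => q j = 1 ∧ s j ≤ t ∧ t < e j)), q j := by
        rw [Finset.sum_insert hnotmem, hcnt]
    _ ≤ load s e q t := Finset.sum_le_sum_of_subset hsub

/-- There is a time after `t` at which at most one width-1 job runs. -/
lemma exists_quiet (t : ℕ) : ∃ u, t < u ∧ cnt s e q u ≤ 1 := by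
  classical
  refine ⟨t + 1 + ∑ j, e j, by omega, ?_⟩
  have : (Finset.univ.filter
      (fun j => q j = 1 ∧ s j ≤ t + 1 + ∑ j, e j ∧ t + 1 + ∑ j, e j < e j)) = ∅ := by
    apply Finset.filter_eq_empty_iff.mpr
    intro j _
    rintro ⟨_, _, hlt⟩
    have : e j ≤ ∑ j, e j := Finset.single_le_sum (fun i _ => Nat.zero_le _) (mem_univ j)
    omega
  rw [cnt, this]
  simp

/-- Right end of the busy block containing the triple time `t`. -/
noncomputable def Bb (t : ℕ) : ℕ := Nat.find (exists_quiet s e q t)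

/-- Left end of the busy block containing the triple time `t`. -/
noncomputable def Aa (t : ℕ) : ℕ :=
  Nat.findGreatest (fun u => u = 0 ∨ cnt s e q (u - 1) ≤ 1) t

lemma Aa_le (t : ℕ) : Aa s e q t ≤ t := Nat.findGreatest_le t

lemma Aa_spec (t : ℕ) : Aa s e q t = 0 ∨ cnt s e q (Aa s e q t - 1) ≤ 1 := by
  unfold Aa
  exact Nat.findGreatest_spec (P := fun u => u = 0 ∨ cnt s e q (u - 1) ≤ 1)
    (Nat.zero_le t) (Or.inl rfl)

lemma Bb_spec (t : ℕ) : t < Bb s e q t ∧ cnt s e q (Bb s e q t) ≤ 1 :=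
  Nat.find_spec (exists_quiet s e q t)

lemma Bb_min {t v : ℕ} (h : v < Bb s e q t) : ¬(t < v ∧ cnt s e q v ≤ 1) :=
  Nat.find_min (exists_quiet s e q t) h

lemma Bb_le {t u : ℕ} (h : t < u ∧ cnt s e q u ≤ 1) : Bb s e q t ≤ u :=
  Nat.find_min' (exists_quiet s e q t) h

/-- Within the busy block of a triple time, at least two width-1 jobs always run. -/
lemma cnt_two_of_block {t : ℕ} (ht : 3 ≤ cnt s e q t) {v : ℕ}
    (h1 : Aa s e q t ≤ v) (h2 : v < Bb s e q t) : 2 ≤ cnt s e q v := by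
  rcases lt_trichotomy v t with hvt | rfl | hvt
  · by_contra hcon
    push_neg at hcon
    have hpred : v + 1 = 0 ∨ cnt s e q (v + 1 - 1) ≤ 1 := by
      right
      simp only [Nat.add_sub_cancel]
      omega
    have := Nat.le_findGreatest (P := fun u => u = 0 ∨ cnt s e q (u - 1) ≤ 1)
      (Nat.succ_le_of_lt hvt) hpred
    rw [← Aa] at this
    omega
  · omega
  · by_contra hcon
    push_neg at hcon
    exact Bb_min s e q h2 ⟨hvt, by omega⟩


/-- Greedy interval coloring: if for every relevant job the number of other relevant
jobs that start no later and are still running at its start time is `< k`, then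
the relevant jobs can be properly `k`-colored (overlapping relevant jobs get
different colors). -/
lemma greedy_coloring (s e : J → ℕ) (P : J → Prop) (k : ℕ) (hk : 0 < k)
    (H : ∀ j, P j → ∀ T : Finset J,
      (∀ x ∈ T, P x ∧ x ≠ j ∧ s x ≤ s j ∧ s j < e x) → T.card < k) :
    ∃ col : J → Fin k, ∀ j j', P j → P j' → j ≠ j' → s j < e j' → s j' < e j →
      col j ≠ col j' := by
  classical
  suffices h : ∀ c : Finset J, ∃ col : J → Fin k,
      ∀ j ∈ c, ∀ j' ∈ c, P j → P j' → j ≠ j' → s j < e j' → s j' < e j →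
        col j ≠ col j' by
    obtain ⟨col, hcol⟩ := h univ
    exact ⟨col, fun j j' => hcol j (mem_univ j) j' (mem_univ j')⟩
  intro c
  induction c using Finset.strongInduction with
  | _ c ih =>
    rcases (c.filter P).eq_empty_or_nonempty with hemp | hne
    · refine ⟨fun _ => ⟨0, hk⟩, fun j hj j' hj' hPj hPj' _ _ _ => ?_⟩
      exact absurd hPj (Finset.filter_eq_empty_iff.mp hemp hj)
    · obtain ⟨j₀, hj₀mem, hj₀max⟩ := (c.filter P).exists_max_image s hne
      have hj₀c : j₀ ∈ c := (mem_filter.mp hj₀mem).1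
      have hPj₀ : P j₀ := (mem_filter.mp hj₀mem).2
      obtain ⟨col', hcol'⟩ := ih (c.erase j₀) (Finset.erase_ssubset hj₀c)
      -- neighbors of j₀ among already-colored jobs
      set N : Finset J :=
        (c.erase j₀).filter (fun j' => P j' ∧ s j₀ < e j' ∧ s j' < e j₀) with hN
      have hNprop : ∀ x ∈ N, P x ∧ x ≠ j₀ ∧ s x ≤ s j₀ ∧ s j₀ < e x := by
        intro x hx
        rw [hN, mem_filter, mem_erase] at hx
        exact ⟨hx.2.1, hx.1.1, hj₀max x (mem_filter.mpr ⟨hx.1.2, hx.2.1⟩), hx.2.2.1⟩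
      have hNcard : (N.image col').card < k := by
        calc (N.image col').card ≤ N.card := card_image_le
          _ < k := H j₀ hPj₀ N hNprop
      have hfree : ∃ f : Fin k, f ∉ N.image col' := by
        by_contra hcon
        push_neg at hcon
        have hsub : (univ : Finset (Fin k)) ⊆ N.image col' := fun f _ => hcon f
        have := card_le_card hsub
        rw [card_univ, Fintype.card_fin] at this
        omega
      obtain ⟨f, hf⟩ := hfree
      refine ⟨Function.update col' j₀ f, ?_⟩
      intro j hj j' hj' hPj hPj' hne' hov1 hov2
      by_cases h1 : j = j₀ <;> by_cases h2 : j' = j₀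
      · exact absurd (h1.trans h2.symm) hne'
      · subst h1
        have hj'N : j' ∈ N := by
          rw [hN, mem_filter, mem_erase]
          exact ⟨⟨h2, hj'⟩, hPj', hov1, hov2⟩
        rw [Function.update_self, Function.update_of_ne h2]
        exact fun hEq => hf (hEq ▸ mem_image_of_mem col' hj'N)
      · subst h2
        have hjN : j ∈ N := by
          rw [hN, mem_filter, mem_erase]
          exact ⟨⟨h1, hj⟩, hPj, hov2, hov1⟩
        rw [Function.update_self, Function.update_of_ne h1]
        exact fun hEq => hf (hEq ▸ mem_image_of_mem col' hjN)
      · rw [Function.update_of_ne h1, Function.update_of_ne h2]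
        exact hcol' j (mem_erase.mpr ⟨h1, hj⟩) j' (mem_erase.mpr ⟨h2, hj'⟩)
          hPj hPj' hne' hov1 hov2



section blocks
variable (s e q : J → ℕ)

/-- If two triple times have intersecting busy blocks, the blocks coincide
(directional version, `t ≤ t'`). -/
lemma blocks_eq_dir {t t' u : ℕ} (ht : 3 ≤ cnt s e q t) (ht' : 3 ≤ cnt s e q t')
    (hle : t ≤ t')
    (hu1 : Aa s e q t ≤ u) (hu2 : u < Bb s e q t)
    (hu3 : Aa s e q t' ≤ u) (hu4 : u < Bb s e q t') :
    Aa s e q t = Aa s e q t' ∧ Bb s e q t = Bb s e q t' := by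
  have hmid : ∀ v, t ≤ v → v ≤ t' → 2 ≤ cnt s e q v := by
    intro v hv1 hv2
    rcases le_or_gt v u with hvu | hvu
    · exact cnt_two_of_block s e q ht (le_trans (Aa_le s e q t) hv1)
        (lt_of_le_of_lt hvu hu2)
    · exact cnt_two_of_block s e q ht' (le_trans hu3 (le_of_lt hvu))
        (lt_of_le_of_lt hv2 (Bb_spec s e q t').1)
  -- B equality
  have hBt_gt : t' < Bb s e q t := by
    by_contra hcon
    push_neg at hcon
    have h2 := hmid (Bb s e q t) (le_of_lt (Bb_spec s e q t).1) hcon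
    have := (Bb_spec s e q t).2
    omega
  have hB1 : Bb s e q t' ≤ Bb s e q t :=
    Bb_le s e q ⟨hBt_gt, (Bb_spec s e q t).2⟩
  have hB2 : Bb s e q t ≤ Bb s e q t' :=
    Bb_le s e q ⟨lt_of_le_of_lt hle (Bb_spec s e q t').1, (Bb_spec s e q t').2⟩
  -- A equality
  have hA1 : Aa s e q t ≤ Aa s e q t' := by
    unfold Aa
    exact Nat.le_findGreatest (le_trans (Aa_le s e q t) hle) (Aa_spec s e q t)
  have hA2 : Aa s e q t' ≤ Aa s e q t := by
    have hAt'le : Aa s e q t' ≤ t := by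
      by_contra hcon
      push_neg at hcon
      have hA0 : Aa s e q t' ≠ 0 := by omega
      have hspec := Aa_spec s e q t'
      have h2 := hmid (Aa s e q t' - 1) (by omega) (by
        have := Aa_le s e q t'; omega)
      omega
    unfold Aa
    exact Nat.le_findGreatest hAt'le (Aa_spec s e q t')
  exact ⟨le_antisymm hA1 hA2, le_antisymm hB2 hB1⟩

lemma blocks_eq {t t' u : ℕ} (ht : 3 ≤ cnt s e q t) (ht' : 3 ≤ cnt s e q t')
    (hu1 : Aa s e q t ≤ u) (hu2 : u < Bb s e q t)
    (hu3 : Aa s e q t' ≤ u) (hu4 : u < Bb s e q t') :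
    Aa s e q t = Aa s e q t' ∧ Bb s e q t = Bb s e q t' := by
  rcases le_total t t' with h | h
  · exact blocks_eq_dir s e q ht ht' h hu1 hu2 hu3 hu4
  · obtain ⟨h1, h2⟩ := blocks_eq_dir s e q ht' ht h hu3 hu4 hu1 hu2
    exact ⟨h1.symm, h2.symm⟩

end blocks
section Mset
variable (s e q : J → ℕ) (col : J → Fin 3)

/-- Colors that are forbidden for a block `[a, b)`: colors of width-1 jobs running
just before `a` or at `b`. -/
noncomputable def badSet (a b : ℕ) : Finset (Fin 3) :=
  ((univ.filter (fun j => q j = 1 ∧ a ≠ 0 ∧ s j ≤ a - 1 ∧ a - 1 < e j)).image col) ∪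
  ((univ.filter (fun j => q j = 1 ∧ s j ≤ b ∧ b < e j)).image col)

/-- A color avoiding the (at most two) bad colors of a block. -/
noncomputable def goodCol (a b : ℕ) : Fin 3 :=
  if h : ((univ : Finset (Fin 3)) \ badSet s e q col a b).Nonempty
  then ((univ : Finset (Fin 3)) \ badSet s e q col a b).min' h else 0

lemma badSet_card_le {t : ℕ} :
    (badSet s e q col (Aa s e q t) (Bb s e q t)).card ≤ 2 := by
  classical
  have h1 : ((univ.filter (fun j => q j = 1 ∧ Aa s e q t ≠ 0 ∧
      s j ≤ Aa s e q t - 1 ∧ Aa s e q t - 1 < e j)).image col).card ≤ 1 := by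
    rcases Aa_spec s e q t with h0 | hle
    · have : (univ.filter (fun j => q j = 1 ∧ Aa s e q t ≠ 0 ∧
          s j ≤ Aa s e q t - 1 ∧ Aa s e q t - 1 < e j)) = ∅ := by
        apply Finset.filter_eq_empty_iff.mpr
        intro j _ hcon
        exact hcon.2.1 h0
      rw [this]
      simp
    · calc ((univ.filter (fun j => q j = 1 ∧ Aa s e q t ≠ 0 ∧
            s j ≤ Aa s e q t - 1 ∧ Aa s e q t - 1 < e j)).image col).card
          ≤ (univ.filter (fun j => q j = 1 ∧ Aa s e q t ≠ 0 ∧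
            s j ≤ Aa s e q t - 1 ∧ Aa s e q t - 1 < e j)).card := card_image_le
        _ ≤ (univ.filter (fun j => q j = 1 ∧
            s j ≤ Aa s e q t - 1 ∧ Aa s e q t - 1 < e j)).card := by
            apply card_le_card
            intro x hx
            rw [mem_filter] at hx ⊢
            exact ⟨hx.1, hx.2.1, hx.2.2.2⟩
        _ ≤ 1 := hle
  have h2 : ((univ.filter (fun j => q j = 1 ∧
      s j ≤ Bb s e q t ∧ Bb s e q t < e j)).image col).card ≤ 1 := by
    calc ((univ.filter (fun j => q j = 1 ∧
          s j ≤ Bb s e q t ∧ Bb s e q t < e j)).image col).card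
        ≤ (univ.filter (fun j => q j = 1 ∧
          s j ≤ Bb s e q t ∧ Bb s e q t < e j)).card := card_image_le
      _ ≤ 1 := (Bb_spec s e q t).2
  calc (badSet s e q col (Aa s e q t) (Bb s e q t)).card
      ≤ _ + _ := card_union_le _ _
    _ ≤ 2 := by omega

lemma goodCol_not_bad {t : ℕ} :
    goodCol s e q col (Aa s e q t) (Bb s e q t) ∉
      badSet s e q col (Aa s e q t) (Bb s e q t) := by
  classical
  have hcard := badSet_card_le s e q col (t := t)
  have hne : ((univ : Finset (Fin 3)) \
      badSet s e q col (Aa s e q t) (Bb s e q t)).Nonempty := by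
    rw [← Finset.card_pos, Finset.card_sdiff_of_subset (Finset.subset_univ _)]
    rw [card_univ, Fintype.card_fin]
    omega
  rw [goodCol, dif_pos hne]
  have := Finset.min'_mem _ hne
  exact (Finset.mem_sdiff.mp this).2

/-- The set of width-1 jobs that go on the middle machine. -/
def Mset (j : J) : Prop :=
  q j = 1 ∧ ∃ t, 3 ≤ cnt s e q t ∧ s j ≤ t ∧ t < e j ∧
    col j = goodCol s e q col (Aa s e q t) (Bb s e q t)

/-- A member of `Mset` with witness `t` is contained in the busy block of `t`. -/
lemma Mset_contained {j : J} {t : ℕ} (ht : 3 ≤ cnt s e q t)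
    (hq1 : q j = 1) (hrun : s j ≤ t ∧ t < e j)
    (hcolj : col j = goodCol s e q col (Aa s e q t) (Bb s e q t)) :
    Aa s e q t ≤ s j ∧ e j ≤ Bb s e q t := by
  constructor
  · by_contra hcon
    push_neg at hcon
    have hA0 : Aa s e q t ≠ 0 := by omega
    have hmem : col j ∈ badSet s e q col (Aa s e q t) (Bb s e q t) := by
      apply Finset.mem_union_left
      apply Finset.mem_image_of_mem
      rw [mem_filter]
      have hAt := Aa_le s e q t
      exact ⟨mem_univ _, hq1, hA0, by omega, by omega⟩
    rw [hcolj] at hmem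
    exact goodCol_not_bad s e q col hmem
  · by_contra hcon
    push_neg at hcon
    have hmem : col j ∈ badSet s e q col (Aa s e q t) (Bb s e q t) := by
      apply Finset.mem_union_right
      apply Finset.mem_image_of_mem
      rw [mem_filter]
      have hBt := (Bb_spec s e q t).1
      exact ⟨mem_univ _, hq1, by omega, hcon⟩
    rw [hcolj] at hmem
    exact goodCol_not_bad s e q col hmem

end Mset

section Mprops
variable (s e q : J → ℕ) (col : J → Fin 3)

/-- Members of `Mset` never overlap wide jobs. -/
lemma Mset_no_wide (hcap : ∀ t : ℕ, load s e q t ≤ 3)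
    {j w : J} {u : ℕ} (hM : Mset s e q col j)
    (hrunj : s j ≤ u ∧ u < e j) (hw : 2 ≤ q w) (hrunw : s w ≤ u ∧ u < e w) :
    False := by
  obtain ⟨hq1, t, ht, hr1, hr2, hcolj⟩ := hM
  obtain ⟨hA, hB⟩ := Mset_contained s e q col ht hq1 ⟨hr1, hr2⟩ hcolj
  have hcnt : 2 ≤ cnt s e q u :=
    cnt_two_of_block s e q ht (by omega) (by omega)
  have := wide_add_cnt_le_load s e q hw hrunw
  have := hcap u
  omega

/-- Distinct members of `Mset` never overlap. -/
lemma Mset_disjoint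
    (hcol : ∀ j j', q j = 1 → q j' = 1 → j ≠ j' → s j < e j' → s j' < e j →
      col j ≠ col j')
    {j j' : J} (hM : Mset s e q col j) (hM' : Mset s e q col j')
    (hne : j ≠ j') (h1 : s j < e j') (h2 : s j' < e j) : False := by
  obtain ⟨hq1, t, ht, hr1, hr2, hcolj⟩ := hM
  obtain ⟨hq1', t', ht', hr1', hr2', hcolj'⟩ := hM'
  obtain ⟨hA, hB⟩ := Mset_contained s e q col ht hq1 ⟨hr1, hr2⟩ hcolj
  obtain ⟨hA', hB'⟩ := Mset_contained s e q col ht' hq1' ⟨hr1', hr2'⟩ hcolj'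
  set u := max (s j) (s j') with hu
  obtain ⟨hAeq, hBeq⟩ := blocks_eq s e q ht ht'
    (u := u) (by omega) (by omega) (by omega) (by omega)
  have hcoleq : col j = col j' := by
    rw [hcolj, hcolj', hAeq, hBeq]
  exact hcol j j' hq1 hq1' hne h1 h2 hcoleq

/-- Every triple time is hit by a member of `Mset`. -/
lemma Mset_hits (hcap : ∀ t : ℕ, load s e q t ≤ 3)
    (hcol : ∀ j j', q j = 1 → q j' = 1 → j ≠ j' → s j < e j' → s j' < e j →
      col j ≠ col j')
    {t : ℕ} (ht : 3 ≤ cnt s e q t) :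
    ∃ j, Mset s e q col j ∧ s j ≤ t ∧ t < e j := by
  classical
  set F := univ.filter (fun j => q j = 1 ∧ s j ≤ t ∧ t < e j) with hF
  have hcard : F.card = 3 := by
    have h1 : cnt s e q t ≤ 3 := le_trans (cnt_le_load s e q t) (hcap t)
    have : cnt s e q t = F.card := rfl
    omega
  have hinj : Set.InjOn col F := by
    intro x hx y hy hxy
    by_contra hne
    have hx' := mem_filter.mp (Finset.mem_coe.mp hx)
    have hy' := mem_filter.mp (Finset.mem_coe.mp hy)
    exact hcol x y hx'.2.1 hy'.2.1 hne (by omega) (by omega) hxy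
  have himg : F.image col = (univ : Finset (Fin 3)) := by
    apply Finset.eq_univ_of_card
    rw [Finset.card_image_of_injOn hinj, hcard, Fintype.card_fin]
  have hmem : goodCol s e q col (Aa s e q t) (Bb s e q t) ∈ F.image col := by
    rw [himg]; exact mem_univ _
  obtain ⟨j, hjF, hjcol⟩ := Finset.mem_image.mp hmem
  rw [hF, mem_filter] at hjF
  exact ⟨j, ⟨hjF.2.1, t, ht, hjF.2.2.1, hjF.2.2.2, hjcol⟩, hjF.2.2⟩

/-- Residual demand on the two side machines is at most `2` at every time. -/
lemma side_load_le (hcap : ∀ t : ℕ, load s e q t ≤ 3)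
    (hcol : ∀ j j', q j = 1 → q j' = 1 → j ≠ j' → s j < e j' → s j' < e j →
      col j ≠ col j')
    (hq : ∀ j, q j = 1 ∨ q j = 2 ∨ q j = 3) (t : ℕ) :
    ∑ j ∈ univ.filter (fun j => (s j ≤ t ∧ t < e j) ∧ ¬ Mset s e q col j),
      (if q j = 3 then 2 else 1) ≤ 2 := by
  classical
  set S := univ.filter (fun j => (s j ≤ t ∧ t < e j) ∧ ¬ Mset s e q col j) with hS
  by_cases h3 : ∃ j3 ∈ S, q j3 = 3
  · obtain ⟨j3, hj3S, hj3⟩ := h3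
    have hsub : S ⊆ {j3} := by
      intro x hx
      rw [mem_singleton]
      by_contra hne
      rw [hS, mem_filter] at hx
      have hj3S' := hj3S
      rw [hS, mem_filter] at hj3S'
      have := pair_le_load s e q (j := x) (j' := j3) hne hx.2.1 hj3S'.2.1
      have := hcap t
      have hqx := hq x
      omega
    calc ∑ j ∈ S, (if q j = 3 then 2 else 1 : ℕ)
        ≤ ∑ j ∈ ({j3} : Finset J), (if q j = 3 then 2 else 1) :=
          Finset.sum_le_sum_of_subset hsub
      _ ≤ 2 := by rw [Finset.sum_singleton]; split <;> omega
  · push_neg at h3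
    have hw1 : ∀ j ∈ S, (if q j = 3 then 2 else 1 : ℕ) = 1 := fun j hj =>
      if_neg (h3 j hj)
    rw [Finset.sum_congr rfl hw1, ← Finset.card_eq_sum_ones]
    -- now bound the cardinality of S
    by_cases h2 : ∃ w ∈ S, q w = 2
    · obtain ⟨w, hwS, hw2⟩ := h2
      have hwS' := hwS
      rw [hS, mem_filter] at hwS'
      have hcnt1 : cnt s e q t ≤ 1 := by
        have := wide_add_cnt_le_load s e q (w := w) (by omega) hwS'.2.1
        have := hcap t
        omega
      have hsub : S ⊆ insert w (univ.filter (fun j => q j = 1 ∧ s j ≤ t ∧ t < e j)) := by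
        intro x hx
        rcases eq_or_ne x w with rfl | hne
        · exact mem_insert_self _ _
        · apply mem_insert_of_mem
          rw [hS, mem_filter] at hx
          have hqx1 : q x = 1 := by
            have := pair_le_load s e q (j := x) (j' := w) hne hx.2.1 hwS'.2.1
            have := hcap t
            have := hq x
            omega
          exact mem_filter.mpr ⟨mem_univ _, hqx1, hx.2.1⟩
      calc S.card ≤ _ := card_le_card hsub
        _ ≤ 1 + cnt s e q t := by
            rw [cnt]
            exact le_trans (card_insert_le _ _) (by omega)
        _ ≤ 2 := by omega
    · push_neg at h2
      -- all members of S have q = 1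
      have hq1S : ∀ x ∈ S, q x = 1 := by
        intro x hx
        have := hq x
        have := h3 x hx
        have := h2 x hx
        omega
      by_cases hcnt : 3 ≤ cnt s e q t
      · obtain ⟨m, hmM, hmrun⟩ := Mset_hits s e q col hcap hcol hcnt
        have hsub : S ⊆ (univ.filter (fun j => q j = 1 ∧ s j ≤ t ∧ t < e j)).erase m := by
          intro x hx
          rw [mem_erase]
          have hx' := hx
          rw [hS, mem_filter] at hx'
          constructor
          · rintro rfl
            exact hx'.2.2 hmM
          · exact mem_filter.mpr ⟨mem_univ _, hq1S x hx, hx'.2.1⟩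
        have hc3 : cnt s e q t ≤ 3 := le_trans (cnt_le_load s e q t) (hcap t)
        calc S.card ≤ _ := card_le_card hsub
          _ = cnt s e q t - 1 := by
              rw [card_erase_of_mem, cnt]
              exact mem_filter.mpr ⟨mem_univ _, (hmM.1), hmrun⟩
          _ ≤ 2 := by omega
      · push_neg at hcnt
        have hsub : S ⊆ univ.filter (fun j => q j = 1 ∧ s j ≤ t ∧ t < e j) := by
          intro x hx
          have hx' := hx
          rw [hS, mem_filter] at hx'
          exact mem_filter.mpr ⟨mem_univ _, hq1S x hx, hx'.2.1⟩
        calc S.card ≤ _ := card_le_card hsub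
          _ = cnt s e q t := rfl
          _ ≤ 2 := by omega

end Mprops

end ThreeMachineAux

open ThreeMachineAux

/-- **Three-machine assignment with the middle machine for wide jobs.**
Jobs run during `[s j, e j)`, require `q j ∈ {1,2,3}` machines, and at every time the
total requirement of running jobs is at most `3`.  Then machines `{0,1,2}` can be
assigned so that every job gets exactly `q j` machines, every job with `q j ≥ 2`
uses the middle machine `1`, and overlapping jobs get disjoint machine sets. -/
theorem three_machine_assignment
    (J : Type*) [Fintype J] (s e q : J → ℕ)
    (hse : ∀ j, s j < e j) (hq : ∀ j, q j ∈ ({1, 2, 3} : Set ℕ))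
    (hcap : ∀ t : ℕ,
      (∑ j ∈ Finset.univ.filter (fun j => s j ≤ t ∧ t < e j), q j) ≤ 3) :
    ∃ ρ : J → Finset (Fin 3),
      (∀ j, (ρ j).card = q j) ∧
      (∀ j, 2 ≤ q j → (1 : Fin 3) ∈ ρ j) ∧
      ∀ j j', j ≠ j' → s j < e j' → s j' < e j →
        Disjoint (ρ j) (ρ j') := by
  classical
  have hq' : ∀ j, q j = 1 ∨ q j = 2 ∨ q j = 3 := by
    intro j
    have := hq j
    simp only [Set.mem_insert_iff, Set.mem_singleton_iff] at this
    tauto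
  have hcap' : ∀ t, load s e q t ≤ 3 := fun t => hcap t
  -- Step 1 : proper 3-coloring of the width-1 jobs
  obtain ⟨col3, hcol3⟩ := greedy_coloring s e (fun j => q j = 1) 3 (by norm_num)
    (by
      intro j hj T hT
      have hjT : j ∉ T := fun hcon => (hT j hcon).2.1 rfl
      have hsub : insert j T ⊆
          univ.filter (fun x => q x = 1 ∧ s x ≤ s j ∧ s j < e x) := by
        intro x hx
        rcases mem_insert.mp hx with rfl | hx
        · exact mem_filter.mpr ⟨mem_univ _, hj, le_refl _, hse x⟩
        · obtain ⟨hP, _, h3, h4⟩ := hT x hx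
          exact mem_filter.mpr ⟨mem_univ _, hP, h3, h4⟩
      have h1 : T.card + 1 ≤ cnt s e q (s j) := by
        rw [cnt]
        calc T.card + 1 = (insert j T).card := (card_insert_of_notMem hjT).symm
          _ ≤ _ := card_le_card hsub
      have h2 : cnt s e q (s j) ≤ 3 :=
        le_trans (cnt_le_load s e q (s j)) (hcap' (s j))
      omega)
  set M : J → Prop := Mset s e q col3 with hM
  -- Step 2 : proper 2-coloring of the side jobs
  obtain ⟨col2, hcol2⟩ := greedy_coloring s e (fun j => ¬ M j ∧ q j ≠ 3) 2 (by norm_num)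
    (by
      intro j hPj T hT
      have hjT : j ∉ T := fun hcon => (hT j hcon).2.1 rfl
      have hsub : insert j T ⊆
          univ.filter (fun x => (s x ≤ s j ∧ s j < e x) ∧ ¬ Mset s e q col3 x) := by
        intro x hx
        rcases mem_insert.mp hx with rfl | hx
        · exact mem_filter.mpr ⟨mem_univ _, ⟨le_refl _, hse x⟩, hPj.1⟩
        · obtain ⟨⟨hMnot, _⟩, _, h3, h4⟩ := hT x hx
          exact mem_filter.mpr ⟨mem_univ _, ⟨h3, h4⟩, hMnot⟩
      have hsum := side_load_le s e q col3 hcap' hcol3 hq' (s j)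
      have hsum2 : ∑ x ∈ insert j T, (if q x = 3 then 2 else 1 : ℕ) ≤ 2 :=
        le_trans (Finset.sum_le_sum_of_subset hsub) hsum
      rw [Finset.sum_insert hjT] at hsum2
      have hTsum : T.card ≤ ∑ x ∈ T, (if q x = 3 then 2 else 1 : ℕ) := by
        rw [card_eq_sum_ones]
        exact Finset.sum_le_sum (fun x _ => by split <;> omega)
      have h1 : (1:ℕ) ≤ (if q j = 3 then 2 else 1) := by split <;> omega
      omega)
  -- the two side machines
  set side : Fin 2 → Fin 3 := fun c => if c = 0 then 0 else 2 with hside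
  have hside1 : ∀ c, side c ≠ 1 := by
    intro c
    fin_cases c <;> simp [hside]
  have hsideinj : ∀ a b : Fin 2, side a = side b → a = b := by
    intro a b
    fin_cases a <;> fin_cases b <;> simp [hside]
  -- the assignment
  refine ⟨fun j => if q j = 3 then (Finset.univ : Finset (Fin 3))
    else if q j = 2 then ({1, side (col2 j)} : Finset (Fin 3))
    else if M j then {1} else {side (col2 j)}, ?_, ?_, ?_⟩
  · intro j
    dsimp only
    rcases hq' j with h | h | h
    · rw [if_neg (show ¬ q j = 3 by omega), if_neg (show ¬ q j = 2 by omega), h]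
      split <;> simp
    · rw [if_neg (show ¬ q j = 3 by omega), if_pos h, h]
      rw [Finset.card_insert_of_notMem
        (by rw [Finset.mem_singleton]; exact (hside1 (col2 j)).symm),
        Finset.card_singleton]
    · rw [if_pos h, h, Finset.card_univ, Fintype.card_fin]
  · intro j hj
    dsimp only
    rcases hq' j with h | h | h
    · omega
    · rw [if_neg (show ¬ q j = 3 by omega), if_pos h]
      exact mem_insert_self _ _
    · rw [if_pos h]
      exact mem_univ _
  · intro j j' hne h1 h2
    dsimp only
    have hrunj : s j ≤ max (s j) (s j') ∧ max (s j) (s j') < e j :=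
      ⟨le_max_left _ _, Nat.max_lt.mpr ⟨hse j, h2⟩⟩
    have hrunj' : s j' ≤ max (s j) (s j') ∧ max (s j) (s j') < e j' :=
      ⟨le_max_right _ _, Nat.max_lt.mpr ⟨h1, hse j'⟩⟩
    have hpair : q j + q j' ≤ 3 :=
      le_trans (pair_le_load s e q hne hrunj hrunj') (hcap' _)
    rcases hq' j with hj1 | hj2 | hj3 <;> rcases hq' j' with hj1' | hj2' | hj3'
    -- (1,1)
    · rw [if_neg (show ¬ q j = 3 by omega), if_neg (show ¬ q j = 2 by omega),
        if_neg (show ¬ q j' = 3 by omega), if_neg (show ¬ q j' = 2 by omega)]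
      by_cases hMj : M j <;> by_cases hMj' : M j'
      · exact absurd (Mset_disjoint s e q col3 hcol3 hMj hMj' hne h1 h2) not_false
      · rw [if_pos hMj, if_neg hMj', Finset.disjoint_singleton]
        exact (hside1 (col2 j')).symm
      · rw [if_neg hMj, if_pos hMj', Finset.disjoint_singleton]
        exact hside1 (col2 j)
      · rw [if_neg hMj, if_neg hMj', Finset.disjoint_singleton]
        intro hcon
        exact hcol2 j j' ⟨hMj, by omega⟩ ⟨hMj', by omega⟩ hne h1 h2
          (hsideinj _ _ hcon)
    -- (1,2)
    · rw [if_neg (show ¬ q j = 3 by omega), if_neg (show ¬ q j = 2 by omega),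
        if_neg (show ¬ q j' = 3 by omega), if_pos hj2']
      by_cases hMj : M j
      · exact absurd (Mset_no_wide s e q col3 hcap' (w := j') hMj hrunj (by omega) hrunj')
          not_false
      · rw [if_neg hMj]
        rw [Finset.disjoint_left]
        intro a ha
        rw [Finset.mem_singleton] at ha
        subst ha
        rw [Finset.mem_insert, Finset.mem_singleton]
        push_neg
        refine ⟨hside1 _, ?_⟩
        intro hcon
        exact hcol2 j j' ⟨hMj, by omega⟩
          ⟨fun hMc => by have := hMc.1; omega, by omega⟩ hne h1 h2
          (hsideinj _ _ hcon)
    -- (1,3)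
    · exfalso; omega
    -- (2,1)
    · rw [if_neg (show ¬ q j = 3 by omega), if_pos hj2,
        if_neg (show ¬ q j' = 3 by omega), if_neg (show ¬ q j' = 2 by omega)]
      by_cases hMj' : M j'
      · exact absurd (Mset_no_wide s e q col3 hcap' (w := j) hMj' hrunj' (by omega) hrunj)
          not_false
      · rw [if_neg hMj']
        rw [Finset.disjoint_right]
        intro a ha
        rw [Finset.mem_singleton] at ha
        subst ha
        rw [Finset.mem_insert, Finset.mem_singleton]
        push_neg
        refine ⟨hside1 _, ?_⟩
        intro hcon
        exact hcol2 j' j ⟨hMj', by omega⟩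
          ⟨fun hMc => by have := hMc.1; omega, by omega⟩ (Ne.symm hne) h2 h1
          (hsideinj _ _ hcon)
    -- (2,2)
    · exfalso; omega
    -- (2,3)
    · exfalso; omega
    -- (3,·)
    · exfalso; omega
    · exfalso; omega
    · exfalso; omega
end

section
/- Let 0 < ε ≤ 1/4 and W, OPT > 0. Any finite set M of items, each of width at most W and height at most ε·OPT, whose total area is at most ε¹³·W·OPT, can be placed integrally, axis-aligned and without overlap, into a single box of width W and height at most 2ε·OPT. -/
section NFDH

variable {I : Type*} (w h : I → ℝ) (W : ℝ)

/-- Next-fit shelf packing: state is (current x, shelf bottom y, shelf height). -/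
noncomputable def nfdhPack : List I → ℝ → ℝ → ℝ → List (I × ℝ × ℝ)
  | [] => fun _ _ _ => []
  | i :: rest => fun cx cy sh =>
    if cx + w i ≤ W then (i, cx, cy) :: nfdhPack rest (cx + w i) cy sh
    else (i, 0, cy + sh) :: nfdhPack rest (w i) (cy + sh) (h i)

@[simp] lemma nfdhPack_nil (cx cy sh : ℝ) : nfdhPack w h W [] cx cy sh = [] := rfl

lemma nfdhPack_cons (i : I) (rest : List I) (cx cy sh : ℝ) :
    nfdhPack w h W (i :: rest) cx cy sh =
      if cx + w i ≤ W then (i, cx, cy) :: nfdhPack w h W rest (cx + w i) cy sh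
      else (i, 0, cy + sh) :: nfdhPack w h W rest (w i) (cy + sh) (h i) := rfl

/-- Final height of the packing. -/
noncomputable def nfdhHt : List I → ℝ → ℝ → ℝ → ℝ
  | [] => fun _ cy sh => cy + sh
  | i :: rest => fun cx cy sh =>
    if cx + w i ≤ W then nfdhHt rest (cx + w i) cy sh
    else nfdhHt rest (w i) (cy + sh) (h i)

@[simp] lemma nfdhHt_nil (cx cy sh : ℝ) : nfdhHt w h W [] cx cy sh = cy + sh := rfl

lemma nfdhHt_cons (i : I) (rest : List I) (cx cy sh : ℝ) :
    nfdhHt w h W (i :: rest) cx cy sh =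
      if cx + w i ≤ W then nfdhHt w h W rest (cx + w i) cy sh
      else nfdhHt w h W rest (w i) (cy + sh) (h i) := rfl

/-- Height of the head of a list (0 for empty). -/
def hdh : List I → ℝ
  | [] => 0
  | i :: _ => h i

/-- Total area of a list of items. -/
def areaL (l : List I) : ℝ := (l.map (fun i => w i * h i)).sum

lemma nfdhPack_fst (l : List I) (cx cy sh : ℝ) :
    (nfdhPack w h W l cx cy sh).map Prod.fst = l := by
  induction l generalizing cx cy sh with
  | nil => rfl
  | cons i rest ih =>
    rw [nfdhPack_cons]
    split <;> simp [ih]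

lemma nfdhHt_lower (l : List I) (cx cy sh : ℝ)
    (hh : ∀ i ∈ l, 0 ≤ h i) :
    cy + sh ≤ nfdhHt w h W l cx cy sh := by
  induction l generalizing cx cy sh with
  | nil => simp
  | cons i rest ih =>
    rw [nfdhHt_cons]
    split
    · exact ih _ _ _ (fun j hj => hh j (List.mem_cons_of_mem _ hj))
    · have h1 : 0 ≤ h i := hh i List.mem_cons_self
      have := ih (w i) (cy + sh) (h i) (fun j hj => hh j (List.mem_cons_of_mem _ hj))
      linarith

lemma hdh_nonneg (l : List I) (hh : ∀ i ∈ l, 0 ≤ h i) : 0 ≤ hdh h l := by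
  cases l with
  | nil => simp [hdh]
  | cons i rest => exact hh i List.mem_cons_self

lemma hdh_le (l : List I) (c : ℝ) (hc : ∀ i ∈ l, h i ≤ c) (hc0 : 0 ≤ c) : hdh h l ≤ c := by
  cases l with
  | nil => simpa [hdh]
  | cons i rest => exact hc i List.mem_cons_self

/-- Key height bound, in multiplied-out form. -/
lemma nfdhHt_bound (l : List I) (cx cy sh : ℝ) (hcx : 0 ≤ cx)
    (hw : ∀ i ∈ l, 0 < w i ∧ w i ≤ W) (hh : ∀ i ∈ l, 0 < h i)
    (hsort : l.Pairwise (fun a b => h b ≤ h a)) :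
    W * nfdhHt w h W l cx cy sh ≤ W * (cy + sh) + 2 * areaL w h l + cx * hdh h l := by
  induction l generalizing cx cy sh with
  | nil => simp [nfdhHt, areaL, hdh]
  | cons i rest ih =>
    have hwr : ∀ j ∈ rest, 0 < w j ∧ w j ≤ W := fun j hj => hw j (List.mem_cons_of_mem _ hj)
    have hhr : ∀ j ∈ rest, 0 < h j := fun j hj => hh j (List.mem_cons_of_mem _ hj)
    have hsr : rest.Pairwise (fun a b => h b ≤ h a) := hsort.of_cons
    have hle : ∀ j ∈ rest, h j ≤ h i := (List.pairwise_cons.mp hsort).1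
    have hwi := hw i List.mem_cons_self
    have hhi := hh i List.mem_cons_self
    have hhd : hdh h rest ≤ h i := hdh_le h rest (h i) hle hhi.le
    have hhd0 : 0 ≤ hdh h rest := hdh_nonneg h rest (fun j hj => (hhr j hj).le)
    have harea : areaL w h (i :: rest) = w i * h i + areaL w h rest := by simp [areaL]
    rw [nfdhHt_cons, harea]
    show W * _ ≤ W * (cy + sh) + 2 * (w i * h i + areaL w h rest) + cx * hdh h (i :: rest)
    rw [hdh]
    split
    · -- same shelf
      have hIH := ih (cx + w i) cy sh (by linarith [hwi.1]) hwr hhr hsr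
      nlinarith [mul_le_mul_of_nonneg_left hhd hcx, mul_le_mul_of_nonneg_left hhd hwi.1.le,
        mul_pos hwi.1 hhi]
    · -- new shelf
      rename_i hns
      push_neg at hns
      have hcx' : W - w i ≤ cx := by linarith
      have hIH := ih (w i) (cy + sh) (h i) hwi.1.le hwr hhr hsr
      nlinarith [mul_le_mul_of_nonneg_left hhd hwi.1.le,
        mul_le_mul_of_nonneg_right hcx' hhi.le]

/-- Containment of all placed rectangles. -/
lemma nfdhPack_mem (l : List I) (cx cy sh : ℝ) (hcx : 0 ≤ cx) (hsh : 0 ≤ sh)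
    (hw : ∀ i ∈ l, 0 < w i ∧ w i ≤ W) (hh : ∀ i ∈ l, 0 < h i)
    (hhs : ∀ i ∈ l, h i ≤ sh)
    (hsort : l.Pairwise (fun a b => h b ≤ h a)) :
    ∀ p ∈ nfdhPack w h W l cx cy sh,
      0 ≤ p.2.1 ∧ p.2.1 + w p.1 ≤ W ∧ cy ≤ p.2.2 ∧
        p.2.2 + h p.1 ≤ nfdhHt w h W l cx cy sh := by
  induction l generalizing cx cy sh with
  | nil => simp
  | cons i rest ih =>
    have hwr : ∀ j ∈ rest, 0 < w j ∧ w j ≤ W := fun j hj => hw j (List.mem_cons_of_mem _ hj)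
    have hhr : ∀ j ∈ rest, 0 < h j := fun j hj => hh j (List.mem_cons_of_mem _ hj)
    have hsr : rest.Pairwise (fun a b => h b ≤ h a) := hsort.of_cons
    have hle : ∀ j ∈ rest, h j ≤ h i := (List.pairwise_cons.mp hsort).1
    have hwi := hw i List.mem_cons_self
    have hhi := hh i List.mem_cons_self
    have hhsi := hhs i List.mem_cons_self
    rw [nfdhPack_cons, nfdhHt_cons]
    split
    · rename_i hfit
      intro p hp
      rcases List.mem_cons.mp hp with rfl | hp'
      · refine ⟨hcx, hfit, le_refl _, ?_⟩
        have := nfdhHt_lower w h W rest (cx + w i) cy sh (fun j hj => (hhr j hj).le)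
        simpa using by linarith
      · have := ih (cx + w i) cy sh (by linarith [hwi.1]) hsh hwr hhr
          (fun j hj => hhs j (List.mem_cons_of_mem _ hj)) hsr p hp'
        exact ⟨this.1, this.2.1, this.2.2.1, this.2.2.2⟩
    · intro p hp
      rcases List.mem_cons.mp hp with rfl | hp'
      · refine ⟨le_refl 0, by simpa using hwi.2, by simpa using by linarith, ?_⟩
        have := nfdhHt_lower w h W rest (w i) (cy + sh) (h i) (fun j hj => (hhr j hj).le)
        simpa using by linarith
      · have := ih (w i) (cy + sh) (h i) hwi.1.le hhi.le hwr hhr hle hsr p hp'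
        exact ⟨this.1, this.2.1, by linarith [this.2.2.1], this.2.2.2⟩

/-- The disjointness relation between two placed rectangles. -/
def disjRect (p q : I × ℝ × ℝ) : Prop :=
  p.2.1 + w p.1 ≤ q.2.1 ∨ q.2.1 + w q.1 ≤ p.2.1 ∨
  p.2.2 + h p.1 ≤ q.2.2 ∨ q.2.2 + h q.1 ≤ p.2.2

lemma disjRect_symm : Symmetric (disjRect w h) := by
  intro p q hpq
  rcases hpq with h1 | h1 | h1 | h1 <;> simp [disjRect] <;> tauto

/-- Pairwise disjointness, together with the staircase invariant. -/
lemma nfdhPack_disj (l : List I) (cx cy sh : ℝ) (hsh : 0 ≤ sh)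
    (hw : ∀ i ∈ l, 0 < w i ∧ w i ≤ W) (hh : ∀ i ∈ l, 0 < h i)
    (hhs : ∀ i ∈ l, h i ≤ sh)
    (hsort : l.Pairwise (fun a b => h b ≤ h a)) :
    (nfdhPack w h W l cx cy sh).Pairwise (disjRect w h) ∧
      ∀ p ∈ nfdhPack w h W l cx cy sh,
        (p.2.2 = cy ∧ cx ≤ p.2.1) ∨ cy + sh ≤ p.2.2 := by
  induction l generalizing cx cy sh with
  | nil => simp
  | cons i rest ih =>
    have hwr : ∀ j ∈ rest, 0 < w j ∧ w j ≤ W := fun j hj => hw j (List.mem_cons_of_mem _ hj)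
    have hhr : ∀ j ∈ rest, 0 < h j := fun j hj => hh j (List.mem_cons_of_mem _ hj)
    have hsr : rest.Pairwise (fun a b => h b ≤ h a) := hsort.of_cons
    have hle : ∀ j ∈ rest, h j ≤ h i := (List.pairwise_cons.mp hsort).1
    have hwi := hw i List.mem_cons_self
    have hhi := hh i List.mem_cons_self
    have hhsi := hhs i List.mem_cons_self
    rw [nfdhPack_cons]
    split
    · -- same shelf
      obtain ⟨hpw, hstair⟩ := ih (cx + w i) cy sh hsh hwr hhr
        (fun j hj => hhs j (List.mem_cons_of_mem _ hj)) hsr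
      constructor
      · refine List.pairwise_cons.mpr ⟨?_, hpw⟩
        intro p hp
        rcases hstair p hp with ⟨hy, hx⟩ | hy
        · exact Or.inl (by simpa using hx)
        · exact Or.inr (Or.inr (Or.inl (by simp; linarith)))
      · intro p hp
        rcases List.mem_cons.mp hp with rfl | hp'
        · exact Or.inl ⟨rfl, le_refl _⟩
        · rcases hstair p hp' with ⟨hy, hx⟩ | hy
          · exact Or.inl ⟨hy, by linarith [hwi.1]⟩
          · exact Or.inr hy
    · -- new shelf
      obtain ⟨hpw, hstair⟩ := ih (w i) (cy + sh) (h i) hhi.le hwr hhr hle hsr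
      constructor
      · refine List.pairwise_cons.mpr ⟨?_, hpw⟩
        intro p hp
        rcases hstair p hp with ⟨hy, hx⟩ | hy
        · exact Or.inl (by simpa using hx)
        · exact Or.inr (Or.inr (Or.inl (by simp; linarith)))
      · intro p hp
        rcases List.mem_cons.mp hp with rfl | hp'
        · exact Or.inr (le_refl _)
        · rcases hstair p hp' with ⟨hy, hx⟩ | hy
          · exact Or.inr (le_of_eq hy.symm)
          · exact Or.inr (by linarith)

end NFDH

/-- **Placing the medium items.**
Any finite set of items of width at most `W`, height at most `ε·OPT`, and total area at
most `ε¹³·W·OPT` can be placed integrally (as pairwise disjoint axis-aligned rectangles)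
into a single box of width `W` and height at most `2ε·OPT`. -/
theorem place_medium_items
    (W OPT ε : ℝ) (hW : 0 < W) (hOPT : 0 < OPT) (hε0 : 0 < ε) (hε : ε ≤ 1 / 4)
    (I : Type*) [Fintype I] (w h : I → ℝ)
    (hw : ∀ i, 0 < w i ∧ w i ≤ W) (hh : ∀ i, 0 < h i ∧ h i ≤ ε * OPT)
    (harea : (∑ i, w i * h i) ≤ ε ^ 13 * W * OPT) :
    ∃ (Hb : ℝ) (x y : I → ℝ),
      Hb ≤ 2 * ε * OPT ∧
      (∀ i, 0 ≤ x i ∧ x i + w i ≤ W ∧ 0 ≤ y i ∧ y i + h i ≤ Hb) ∧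
      (∀ i j, i ≠ j →
        x i + w i ≤ x j ∨ x j + w j ≤ x i ∨ y i + h i ≤ y j ∨ y j + h j ≤ y i) := by
  classical
  -- sort the items by non-increasing height
  obtain ⟨l, hperm, hsort⟩ : ∃ l : List I, l.Perm Finset.univ.toList ∧
      l.Pairwise (fun a b => h b ≤ h a) := by
    refine ⟨(Finset.univ.toList (α := I)).mergeSort (fun a b => decide (h b ≤ h a)),
      List.mergeSort_perm _ _, ?_⟩
    have := List.pairwise_mergeSort (le := fun a b : I => decide (h b ≤ h a))
      (fun a b c hab hbc => by simp_all; linarith)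
      (fun a b => by simpa using le_total (h b) (h a))
      (Finset.univ.toList (α := I))
    exact this.imp (by simp)
  have hmeml : ∀ i : I, i ∈ l := fun i => hperm.mem_iff.mpr (by simp)
  have hAsum : areaL w h l = ∑ i, w i * h i := by
    rw [areaL]
    rw [List.Perm.sum_eq (hperm.map _)]
    rw [← Finset.sum_map_toList]
  have hA0 : 0 ≤ ∑ i, w i * h i :=
    Finset.sum_nonneg fun i _ => mul_nonneg (hw i).1.le (hh i).1.le
  -- the key numeric bound : ε*OPT + 2*ε^13*OPT ≤ 2*ε*OPT
  have hnum : 2 * (ε ^ 13 * OPT) ≤ ε * OPT := by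
    have h1 : ε ^ 12 ≤ (1/4 : ℝ) ^ 12 := by
      apply pow_le_pow_left₀ hε0.le hε
    have h2 : (2 : ℝ) * (1/4 : ℝ) ^ 12 ≤ 1 := by norm_num
    have h3 : 2 * ε ^ 12 ≤ 1 := by nlinarith [pow_nonneg hε0.le 12]
    calc 2 * (ε ^ 13 * OPT) = (2 * ε ^ 12) * (ε * OPT) := by ring
      _ ≤ 1 * (ε * OPT) := by
          apply mul_le_mul_of_nonneg_right h3 (by positivity)
      _ = ε * OPT := one_mul _
  cases l with
  | nil =>
    -- no items at all
    have : IsEmpty I := ⟨fun i => by simpa using hmeml i⟩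
    refine ⟨0, fun _ => 0, fun _ => 0, by positivity, fun i => this.elim i,
      fun i _ _ => this.elim i⟩
  | cons i0 rest =>
    have hwr : ∀ j ∈ rest, 0 < w j ∧ w j ≤ W := fun j _ => hw j
    have hhr : ∀ j ∈ rest, 0 < h j := fun j _ => (hh j).1
    have hsr : rest.Pairwise (fun a b => h b ≤ h a) := hsort.of_cons
    have hle : ∀ j ∈ rest, h j ≤ h i0 := (List.pairwise_cons.mp hsort).1
    -- the packing : first item at (0,0), rest by next-fit on shelves
    set Hb := nfdhHt w h W rest (w i0) 0 (h i0) with hHb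
    set out : List (I × ℝ × ℝ) := (i0, 0, 0) :: nfdhPack w h W rest (w i0) 0 (h i0)
      with hout
    have hfst : out.map Prod.fst = i0 :: rest := by
      rw [hout]; simp [nfdhPack_fst]
    -- height bound
    have hbd := nfdhHt_bound w h W rest (w i0) 0 (h i0) (hw i0).1.le hwr hhr hsr
    have hhd : hdh h rest ≤ h i0 := hdh_le h rest (h i0) hle (hh i0).1.le
    have hhd0 : 0 ≤ hdh h rest := hdh_nonneg h rest (fun j hj => (hhr j hj).le)
    have hAr : areaL w h rest = (∑ i, w i * h i) - w i0 * h i0 := by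
      have : areaL w h (i0 :: rest) = w i0 * h i0 + areaL w h rest := by simp [areaL]
      rw [← hAsum]; rw [this]; ring
    have hHbBound : Hb ≤ 2 * ε * OPT := by
      rw [hHb]
      have : W * nfdhHt w h W rest (w i0) 0 (h i0)
          ≤ W * (0 + h i0) + 2 * areaL w h rest + w i0 * hdh h rest := hbd
      have h2 : W * nfdhHt w h W rest (w i0) 0 (h i0)
          ≤ W * h i0 + 2 * (∑ i, w i * h i) := by
        have hwh : w i0 * hdh h rest ≤ 2 * (w i0 * h i0) := by
          nlinarith [(hw i0).1, (hh i0).1]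
        rw [hAr] at this
        linarith
      have h3 : W * nfdhHt w h W rest (w i0) 0 (h i0)
          ≤ W * (ε * OPT) + 2 * (ε ^ 13 * W * OPT) := by
        have := mul_le_mul_of_nonneg_left (hh i0).2 hW.le
        linarith
      have h4 : W * (ε * OPT) + 2 * (ε ^ 13 * W * OPT) ≤ W * (2 * ε * OPT) := by
        have := mul_le_mul_of_nonneg_left hnum hW.le
        nlinarith
      have := h3.trans h4
      exact le_of_mul_le_mul_left this hW
    -- containment of all rectangles in out
    have hmemo : ∀ p ∈ out, 0 ≤ p.2.1 ∧ p.2.1 + w p.1 ≤ W ∧ 0 ≤ p.2.2 ∧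
        p.2.2 + h p.1 ≤ Hb := by
      intro p hp
      rcases List.mem_cons.mp hp with rfl | hp'
      · refine ⟨le_refl _, by simpa using (hw i0).2, le_refl _, ?_⟩
        have := nfdhHt_lower w h W rest (w i0) 0 (h i0) (fun j hj => (hhr j hj).le)
        simpa using by linarith
      · exact nfdhPack_mem w h W rest (w i0) 0 (h i0) (hw i0).1.le (hh i0).1.le
          hwr hhr hle hsr p hp'
    -- pairwise disjointness of out
    have hdisj : out.Pairwise (disjRect w h) := by
      obtain ⟨hpw, hstair⟩ := nfdhPack_disj w h W rest (w i0) 0 (h i0) (hh i0).1.le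
        hwr hhr hle hsr
      refine List.pairwise_cons.mpr ⟨?_, hpw⟩
      intro p hp
      rcases hstair p hp with ⟨hy, hx⟩ | hy
      · exact Or.inl (by simpa using hx)
      · exact Or.inr (Or.inr (Or.inl (by simp; linarith)))
    -- extract coordinate functions
    have hex : ∀ i : I, ∃ p, p ∈ out ∧ p.1 = i := by
      intro i
      have : i ∈ out.map Prod.fst := hfst ▸ hmeml i
      obtain ⟨p, hp, hpe⟩ := List.mem_map.mp this
      exact ⟨p, hp, hpe⟩
    choose p hpmem hpfst using hex
    refine ⟨Hb, fun i => (p i).2.1, fun i => (p i).2.2, hHbBound, ?_, ?_⟩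
    · intro i
      have := hmemo (p i) (hpmem i)
      rw [hpfst i] at this
      exact this
    · intro i j hij
      have hne : p i ≠ p j := fun hcon => hij (by rw [← hpfst i, ← hpfst j, hcon])
      have := (haveI : Std.Symm (disjRect w h) := ⟨fun a b hab => disjRect_symm w h hab⟩; hdisj.forall (hpmem i) (hpmem j) hne)
      rcases this with h1 | h1 | h1 | h1 <;>
        [exact Or.inl (by rwa [hpfst i] at h1);
         exact Or.inr (Or.inl (by rwa [hpfst j] at h1));
         exact Or.inr (Or.inr (Or.inl (by rwa [hpfst i] at h1)));
         exact Or.inr (Or.inr (Or.inr (by rwa [hpfst j] at h1)))]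
end

section
/- Let W, OPT > 0 be reals, let f be a real with 0 < f < 1 and 1/f ∈ ℕ, and define the sequence σ_0 = f and σ_{i+1} = σ_i²·f. Let I be a finite set of items with widths w(i) ∈ (0, W] and heights h(i) ∈ (0, OPT], and suppose the total area Σ_{i∈I} w(i)·h(i) is at most W·OPT. Then there exists an index i ∈ {0, 1, …, 2/f − 1} such that the total area of the items j with w(j) ∈ (σ_{i+1}·W, σ_i·W] or h(j) ∈ (σ_{i+1}·OPT, σ_i·OPT] is at most f·W·OPT. -/
open scoped Classical

/-- **Choosing the parameters `δ` and `μ` (pigeonhole on the gap sequence).**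
With `σ 0 = f` and `σ (i+1) = σ i ² · f`, for some index `i < 2/f` the items whose
width lies in `(σ (i+1)·W, σ i·W]` or whose height lies in `(σ (i+1)·OPT, σ i·OPT]`
have total area at most `f·W·OPT`. -/
theorem exists_index_medium_area_small
    (W OPT f : ℝ) (hW : 0 < W) (hOPT : 0 < OPT)
    (hf0 : 0 < f) (hf1 : f < 1) (n : ℕ) (hn : (n : ℝ) = 1 / f)
    (σ : ℕ → ℝ) (hσ0 : σ 0 = f) (hσs : ∀ i, σ (i + 1) = (σ i) ^ 2 * f)
    (I : Type*) [Fintype I] (w h : I → ℝ)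
    (hw : ∀ i, 0 < w i ∧ w i ≤ W) (hh : ∀ i, 0 < h i ∧ h i ≤ OPT)
    (harea : (∑ i, w i * h i) ≤ W * OPT) :
    ∃ i : ℕ, i < 2 * n ∧
      (∑ j ∈ Finset.univ.filter (fun j =>
          (σ (i + 1) * W < w j ∧ w j ≤ σ i * W) ∨
          (σ (i + 1) * OPT < h j ∧ h j ≤ σ i * OPT)), w j * h j)
        ≤ f * W * OPT := by
  have hnf : (n : ℝ) * f = 1 := by rw [hn]; field_simp
  have hnpos : 0 < n := by
    by_contra hc
    push_neg at hc
    interval_cases n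
    simp at hnf
  -- positivity and monotonicity of σ
  have hσpos : ∀ i, 0 < σ i := by
    intro i; induction i with
    | zero => rw [hσ0]; exact hf0
    | succ k ih => rw [hσs]; positivity
  have hσle : ∀ i, σ i ≤ f := by
    intro i; induction i with
    | zero => rw [hσ0]
    | succ k ih => rw [hσs]; nlinarith [hσpos k]
  have hσanti : StrictAnti σ := by
    apply strictAnti_nat_of_succ_lt
    intro i
    rw [hσs]
    nlinarith [hσpos i, hσle i]
  -- abbreviations
  set P : ℕ → I → Prop := fun i j =>
    (σ (i + 1) * W < w j ∧ w j ≤ σ i * W) ∨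
    (σ (i + 1) * OPT < h j ∧ h j ≤ σ i * OPT) with hP
  set S : ℕ → ℝ := fun i => ∑ j ∈ Finset.univ.filter (P i), w j * h j with hS
  -- each item is counted for at most two indices
  have hcount : ∀ j : I, ∀ i ∈ Finset.range (2 * n),
      (if P i j then w j * h j else 0)
        ≤ (if σ (i + 1) * W < w j ∧ w j ≤ σ i * W then w j * h j else 0)
          + (if σ (i + 1) * OPT < h j ∧ h j ≤ σ i * OPT then w j * h j else 0) := by
    intro j i _
    have ha : 0 ≤ w j * h j := le_of_lt (mul_pos (hw j).1 (hh j).1)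
    by_cases h1 : σ (i + 1) * W < w j ∧ w j ≤ σ i * W <;>
      by_cases h2 : σ (i + 1) * OPT < h j ∧ h j ≤ σ i * OPT <;>
      simp [hP, h1, h2, ha]
  have huniqW : ∀ j : I,
      ((Finset.range (2 * n)).filter
        (fun i => σ (i + 1) * W < w j ∧ w j ≤ σ i * W)).card ≤ 1 := by
    intro j
    apply Finset.card_le_one.mpr
    intro a ha b hb
    simp only [Finset.mem_filter] at ha hb
    by_contra hab
    rcases Nat.lt_or_ge a b with hlt | hge
    · have : σ b ≤ σ (a + 1) := (hσanti.antitone) hlt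
      have := ha.2.1; have := hb.2.2
      nlinarith
    · have hlt' : b < a := lt_of_le_of_ne hge (Ne.symm hab)
      have : σ a ≤ σ (b + 1) := (hσanti.antitone) hlt'
      have := hb.2.1; have := ha.2.2
      nlinarith
  have huniqH : ∀ j : I,
      ((Finset.range (2 * n)).filter
        (fun i => σ (i + 1) * OPT < h j ∧ h j ≤ σ i * OPT)).card ≤ 1 := by
    intro j
    apply Finset.card_le_one.mpr
    intro a ha b hb
    simp only [Finset.mem_filter] at ha hb
    by_contra hab
    rcases Nat.lt_or_ge a b with hlt | hge
    · have : σ b ≤ σ (a + 1) := (hσanti.antitone) hlt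
      have := ha.2.1; have := hb.2.2
      nlinarith
    · have hlt' : b < a := lt_of_le_of_ne hge (Ne.symm hab)
      have : σ a ≤ σ (b + 1) := (hσanti.antitone) hlt'
      have := hb.2.1; have := ha.2.2
      nlinarith
  -- bound the double sum
  have hsum : (∑ i ∈ Finset.range (2 * n), S i) ≤ 2 * (W * OPT) := by
    have step1 : (∑ i ∈ Finset.range (2 * n), S i)
        = ∑ j : I, ∑ i ∈ Finset.range (2 * n), (if P i j then w j * h j else 0) := by
      simp only [hS]
      rw [Finset.sum_comm]
      congr 1
      ext i
      rw [Finset.sum_filter]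
    rw [step1]
    have step2 : ∀ j : I,
        (∑ i ∈ Finset.range (2 * n), (if P i j then w j * h j else 0))
          ≤ 2 * (w j * h j) := by
      intro j
      have ha : 0 ≤ w j * h j := le_of_lt (mul_pos (hw j).1 (hh j).1)
      calc (∑ i ∈ Finset.range (2 * n), (if P i j then w j * h j else 0))
          ≤ ∑ i ∈ Finset.range (2 * n),
              ((if σ (i + 1) * W < w j ∧ w j ≤ σ i * W then w j * h j else 0)
                + (if σ (i + 1) * OPT < h j ∧ h j ≤ σ i * OPT then w j * h j else 0)) :=
            Finset.sum_le_sum (hcount j)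
        _ = (∑ i ∈ Finset.range (2 * n),
              (if σ (i + 1) * W < w j ∧ w j ≤ σ i * W then w j * h j else 0))
            + ∑ i ∈ Finset.range (2 * n),
              (if σ (i + 1) * OPT < h j ∧ h j ≤ σ i * OPT then w j * h j else 0) :=
            Finset.sum_add_distrib
        _ ≤ w j * h j + w j * h j := by
            gcongr
            · rw [← Finset.sum_filter, Finset.sum_const, nsmul_eq_mul]
              calc (((Finset.range (2 * n)).filter _).card : ℝ) * (w j * h j)
                  ≤ 1 * (w j * h j) := by
                    apply mul_le_mul_of_nonneg_right _ ha
                    exact_mod_cast huniqW j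
                _ = w j * h j := one_mul _
            · rw [← Finset.sum_filter, Finset.sum_const, nsmul_eq_mul]
              calc (((Finset.range (2 * n)).filter _).card : ℝ) * (w j * h j)
                  ≤ 1 * (w j * h j) := by
                    apply mul_le_mul_of_nonneg_right _ ha
                    exact_mod_cast huniqH j
                _ = w j * h j := one_mul _
        _ = 2 * (w j * h j) := by ring
    calc (∑ j : I, ∑ i ∈ Finset.range (2 * n), (if P i j then w j * h j else 0))
        ≤ ∑ j : I, 2 * (w j * h j) := Finset.sum_le_sum (fun j _ => step2 j)
      _ = 2 * ∑ j : I, w j * h j := by rw [Finset.mul_sum]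
      _ ≤ 2 * (W * OPT) := by linarith
  -- pigeonhole
  by_contra hcon
  push_neg at hcon
  have hne : (Finset.range (2 * n)).Nonempty := by
    rw [Finset.nonempty_range_iff]
    omega
  have hlt : (∑ i ∈ Finset.range (2 * n), (f * W * OPT))
      < ∑ i ∈ Finset.range (2 * n), S i := by
    apply Finset.sum_lt_sum_of_nonempty hne
    intro i hi
    exact hcon i (Finset.mem_range.mp hi)
  rw [Finset.sum_const, nsmul_eq_mul, Finset.card_range] at hlt
  have hcast : ((2 * n : ℕ) : ℝ) = 2 * (n : ℝ) := by push_cast; ring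
  rw [hcast] at hlt
  have heq : 2 * (n : ℝ) * (f * W * OPT) = 2 * (W * OPT) := by
    calc 2 * (n : ℝ) * (f * W * OPT) = 2 * ((n : ℝ) * f) * (W * OPT) := by ring
      _ = 2 * (W * OPT) := by rw [hnf]; ring
  linarith
end

section
/- Consider a box of width W > 0 and height h > 0, finitely many bottom items (w_1, a_1), …, (w_n, a_n) and finitely many top items (v_1, b_1), …, (v_m, b_m), all with positive widths and with heights a_i ≤ h and b_j ≤ h. Suppose there exists a feasible placement of all these items in the box. Then the following placement is also feasible: the bottom items are placed consecutively left-to-right starting at 0 in order of non-increasing height, and the top items are placed consecutively ending at W (right-justified) in order of non-decreasing height from left to right. -/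
open MeasureTheory


lemma two_families_width_le (W : ℝ) (hW : 0 ≤ W) {ι κ : Type*}
    (s : Finset ι) (t : Finset κ)
    (x w : ι → ℝ) (y v : κ → ℝ)
    (hxw : ∀ i ∈ s, 0 ≤ x i ∧ x i + w i ≤ W)
    (hyv : ∀ j ∈ t, 0 ≤ y j ∧ y j + v j ≤ W)
    (hw : ∀ i ∈ s, 0 ≤ w i) (hv : ∀ j ∈ t, 0 ≤ v j)
    (hss : ∀ i ∈ s, ∀ i' ∈ s, i ≠ i' → x i + w i ≤ x i' ∨ x i' + w i' ≤ x i)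
    (htt : ∀ j ∈ t, ∀ j' ∈ t, j ≠ j' → y j + v j ≤ y j' ∨ y j' + v j' ≤ y j)
    (hst : ∀ i ∈ s, ∀ j ∈ t, x i + w i ≤ y j ∨ y j + v j ≤ x i) :
    (∑ i ∈ s, w i) + (∑ j ∈ t, v j) ≤ W := by
  set A : Set ℝ := ⋃ i ∈ s, Set.Ico (x i) (x i + w i) with hA
  set B : Set ℝ := ⋃ j ∈ t, Set.Ico (y j) (y j + v j) with hB
  have hAm : MeasurableSet A := s.measurableSet_biUnion (fun i _ => measurableSet_Ico)
  have hBm : MeasurableSet B := t.measurableSet_biUnion (fun j _ => measurableSet_Ico)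
  have hvolA : volume A = ∑ i ∈ s, ENNReal.ofReal (w i) := by
    rw [measure_biUnion_finset ?_ (fun i _ => measurableSet_Ico)]
    · exact Finset.sum_congr rfl fun i _ => by rw [Real.volume_Ico]; congr 1; ring
    · intro i hi i' hi' hne
      rcases hss i hi i' hi' hne with h | h
      · exact Set.Ico_disjoint_Ico.mpr (le_trans (min_le_left _ _) (le_trans h (le_max_right _ _)))
      · exact Set.Ico_disjoint_Ico.mpr (le_trans (min_le_right _ _) (le_trans h (le_max_left _ _)))
  have hvolB : volume B = ∑ j ∈ t, ENNReal.ofReal (v j) := by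
    rw [measure_biUnion_finset ?_ (fun j _ => measurableSet_Ico)]
    · exact Finset.sum_congr rfl fun j _ => by rw [Real.volume_Ico]; congr 1; ring
    · intro j hj j' hj' hne
      rcases htt j hj j' hj' hne with h | h
      · exact Set.Ico_disjoint_Ico.mpr (le_trans (min_le_left _ _) (le_trans h (le_max_right _ _)))
      · exact Set.Ico_disjoint_Ico.mpr (le_trans (min_le_right _ _) (le_trans h (le_max_left _ _)))
  have hdisj : Disjoint A B := by
    rw [Set.disjoint_left]
    intro z hz hz'
    simp only [hA, hB, Set.mem_iUnion, Set.mem_Ico] at hz hz'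
    obtain ⟨i, hi, h1, h2⟩ := hz
    obtain ⟨j, hj, h3, h4⟩ := hz'
    rcases hst i hi j hj with h | h <;> linarith
  have hsub : A ∪ B ⊆ Set.Ico 0 W := by
    apply Set.union_subset
    · refine Set.iUnion₂_subset fun i hi => Set.Ico_subset_Ico (hxw i hi).1 (hxw i hi).2
    · refine Set.iUnion₂_subset fun j hj => Set.Ico_subset_Ico (hyv j hj).1 (hyv j hj).2
  have hle : volume A + volume B ≤ ENNReal.ofReal W := by
    rw [← measure_union hdisj hBm]
    calc volume (A ∪ B) ≤ volume (Set.Ico 0 W) := measure_mono hsub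
      _ = ENNReal.ofReal W := by rw [Real.volume_Ico, sub_zero]
  rw [hvolA, hvolB, ← ENNReal.ofReal_sum_of_nonneg hw, ← ENNReal.ofReal_sum_of_nonneg hv,
    ← ENNReal.ofReal_add (Finset.sum_nonneg hw) (Finset.sum_nonneg hv)] at hle
  exact (ENNReal.ofReal_le_ofReal_iff hW).mp hle



/-- A feasible placement of `n` bottom items `(w i, a i)` (occupying
`[x i, x i + w i) × [0, a i)`) and `m` top items `(v j, b j)` (occupying
`[y j, y j + v j) × [h - b j, h)`) in the box `[0, W) × [0, h]`:
all items lie in the box and the occupied regions are pairwise disjoint. -/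
def FeasiblePlacement (W h : ℝ) {n m : ℕ} (w a : Fin n → ℝ) (v b : Fin m → ℝ)
    (x : Fin n → ℝ) (y : Fin m → ℝ) : Prop :=
  (∀ i, 0 ≤ x i ∧ x i + w i ≤ W) ∧
  (∀ j, 0 ≤ y j ∧ y j + v j ≤ W) ∧
  (∀ i i', i ≠ i' → x i + w i ≤ x i' ∨ x i' + w i' ≤ x i) ∧
  (∀ j j', j ≠ j' → y j + v j ≤ y j' ∨ y j' + v j' ≤ y j) ∧
  (∀ i j, x i < y j + v j → y j < x i + w i → a i + b j ≤ h)

/-- **Sorting bottom items by non-increasing height and top items (right-justified)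
by non-decreasing height yields a feasible placement whenever any feasible
placement exists.** -/
theorem sorted_placement_feasible
    (W h : ℝ) (hW : 0 < W) (hh : 0 < h)
    (n m : ℕ) (w a : Fin n → ℝ) (v b : Fin m → ℝ)
    (hw : ∀ i, 0 < w i) (ha : ∀ i, 0 < a i ∧ a i ≤ h)
    (hv : ∀ j, 0 < v j) (hb : ∀ j, 0 < b j ∧ b j ≤ h)
    (x₀ : Fin n → ℝ) (y₀ : Fin m → ℝ)
    (hfeas : FeasiblePlacement W h w a v b x₀ y₀)
    (πb : Equiv.Perm (Fin n)) (πt : Equiv.Perm (Fin m))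
    (hπb : Antitone (fun k => a (πb k))) (hπt : Monotone (fun k => b (πt k))) :
    FeasiblePlacement W h w a v b
      (fun i => ∑ k ∈ Finset.univ.filter (fun k => k < πb.symm i), w (πb k))
      (fun j => W - ∑ k ∈ Finset.univ.filter (fun k => πt.symm j ≤ k), v (πt k)) := by
  obtain ⟨hB, hT, hBB, hTT, hBT⟩ := hfeas
  -- key sum identities
  have keyB : ∀ p : Fin n, (∑ k ∈ Finset.univ.filter (fun k => k < p), w (πb k)) + w (πb p)
      = ∑ k ∈ Finset.univ.filter (fun k => k ≤ p), w (πb k) := by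
    intro p
    have hins : Finset.univ.filter (fun k => k ≤ p)
        = insert p (Finset.univ.filter (fun k => k < p)) := by
      ext k; simp [le_iff_lt_or_eq, or_comm]
    rw [hins, Finset.sum_insert (by simp)]; ring
  have keyT : ∀ q : Fin m, (∑ k ∈ Finset.univ.filter (fun k => q ≤ k), v (πt k))
      = v (πt q) + ∑ k ∈ Finset.univ.filter (fun k => q < k), v (πt k) := by
    intro q
    have hins : Finset.univ.filter (fun k => q ≤ k)
        = insert q (Finset.univ.filter (fun k => q < k)) := by
      ext k; simp [le_iff_lt_or_eq, eq_comm, or_comm]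
    rw [hins, Finset.sum_insert (by simp)]
  -- total widths are at most W
  have hWb : (∑ k : Fin n, w (πb k)) ≤ W := by
    have := two_families_width_le W hW.le (κ := Fin m) Finset.univ ∅
      (fun k => x₀ (πb k)) (fun k => w (πb k)) y₀ v
      (fun i _ => hB (πb i)) (by simp) (fun i _ => (hw _).le) (by simp)
      (fun k _ k' _ hne => hBB (πb k) (πb k') (πb.injective.ne hne))
      (by simp) (by simp)
    simpa using this
  have hWt : (∑ k : Fin m, v (πt k)) ≤ W := by
    have := two_families_width_le W hW.le (ι := Fin n) ∅ Finset.univ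
      x₀ w (fun k => y₀ (πt k)) (fun k => v (πt k))
      (by simp) (fun j _ => hT (πt j)) (by simp) (fun j _ => (hv _).le)
      (by simp)
      (fun k _ k' _ hne => hTT (πt k) (πt k') (πt.injective.ne hne))
      (by simp)
    simpa using this
  refine ⟨?_, ?_, ?_, ?_, ?_⟩
  · -- bottom items fit in the box
    intro i
    constructor
    · exact Finset.sum_nonneg fun k _ => (hw _).le
    · have hiw : w i = w (πb (πb.symm i)) := by rw [Equiv.apply_symm_apply]
      rw [hiw, keyB (πb.symm i)]
      calc (∑ k ∈ Finset.univ.filter (fun k => k ≤ πb.symm i), w (πb k))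
          ≤ ∑ k : Fin n, w (πb k) :=
            Finset.sum_le_sum_of_subset_of_nonneg (Finset.filter_subset _ _)
              (fun k _ _ => (hw _).le)
        _ ≤ W := hWb
  · -- top items fit in the box
    intro j
    dsimp only
    constructor
    · have : (∑ k ∈ Finset.univ.filter (fun k => πt.symm j ≤ k), v (πt k))
          ≤ ∑ k : Fin m, v (πt k) :=
        Finset.sum_le_sum_of_subset_of_nonneg (Finset.filter_subset _ _)
          (fun k _ _ => (hv _).le)
      linarith
    · have hjv : v j = v (πt (πt.symm j)) := by rw [Equiv.apply_symm_apply]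
      have hnn : 0 ≤ ∑ k ∈ Finset.univ.filter (fun k => πt.symm j < k), v (πt k) :=
        Finset.sum_nonneg fun k _ => (hv _).le
      rw [hjv]
      have := keyT (πt.symm j)
      linarith
  · -- bottom items pairwise disjoint
    intro i i' hne
    have hne' : πb.symm i ≠ πb.symm i' := fun hc => hne (by
      have := congrArg πb hc; simpa using this)
    have key : ∀ p p' : Fin n, p < p' →
        (∑ k ∈ Finset.univ.filter (fun k => k < p), w (πb k)) + w (πb p)
          ≤ ∑ k ∈ Finset.univ.filter (fun k => k < p'), w (πb k) := by
      intro p p' hpp'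
      rw [keyB p]
      refine Finset.sum_le_sum_of_subset_of_nonneg ?_ (fun k _ _ => (hw _).le)
      intro k hk
      simp only [Finset.mem_filter, Finset.mem_univ, true_and] at hk ⊢
      exact lt_of_le_of_lt hk hpp'
    rcases lt_or_gt_of_ne hne' with hlt | hlt
    · left
      have hiw : w i = w (πb (πb.symm i)) := by rw [Equiv.apply_symm_apply]
      rw [hiw]; exact key _ _ hlt
    · right
      have hiw : w i' = w (πb (πb.symm i')) := by rw [Equiv.apply_symm_apply]
      rw [hiw]; exact key _ _ hlt
  · -- top items pairwise disjoint
    intro j j' hne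
    have hne' : πt.symm j ≠ πt.symm j' := fun hc => hne (by
      have := congrArg πt hc; simpa using this)
    have key : ∀ q q' : Fin m, q < q' →
        (W - ∑ k ∈ Finset.univ.filter (fun k => q ≤ k), v (πt k)) + v (πt q)
          ≤ W - ∑ k ∈ Finset.univ.filter (fun k => q' ≤ k), v (πt k) := by
      intro q q' hqq'
      have hsub : (∑ k ∈ Finset.univ.filter (fun k => q' ≤ k), v (πt k))
          ≤ ∑ k ∈ Finset.univ.filter (fun k => q < k), v (πt k) := by
        refine Finset.sum_le_sum_of_subset_of_nonneg ?_ (fun k _ _ => (hv _).le)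
        intro k hk
        simp only [Finset.mem_filter, Finset.mem_univ, true_and] at hk ⊢
        exact lt_of_lt_of_le hqq' hk
      have := keyT q
      linarith
    rcases lt_or_gt_of_ne hne' with hlt | hlt
    · left
      have hjv : v j = v (πt (πt.symm j)) := by rw [Equiv.apply_symm_apply]
      rw [hjv]; exact key _ _ hlt
    · right
      have hjv : v j' = v (πt (πt.symm j')) := by rw [Equiv.apply_symm_apply]
      rw [hjv]; exact key _ _ hlt
  · -- vertical compatibility of overlapping bottom/top items
    intro i j h1 h2
    dsimp only at h1 h2
    set p := πb.symm i with hp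
    set q := πt.symm j with hq
    have hip : i = πb p := by rw [hp, Equiv.apply_symm_apply]
    have hjq : j = πt q := by rw [hq, Equiv.apply_symm_apply]
    -- from h2: the tall bottom prefix and tall top suffix have total width > W
    have hgt : W < (∑ k ∈ Finset.univ.filter (fun k => k ≤ p), w (πb k))
        + ∑ k ∈ Finset.univ.filter (fun k => q ≤ k), v (πt k) := by
      have hkb := keyB p
      have hw' : w i = w (πb p) := by rw [hip]
      rw [hw'] at h2
      linarith
    by_cases hex : ∃ k l, k ≤ p ∧ q ≤ l ∧
        ¬(x₀ (πb k) + w (πb k) ≤ y₀ (πt l) ∨ y₀ (πt l) + v (πt l) ≤ x₀ (πb k))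
    · obtain ⟨k, l, hkp, hql, hno⟩ := hex
      push_neg at hno
      have hab : a (πb k) + b (πt l) ≤ h := hBT (πb k) (πt l) (by linarith [hno.2]) (by linarith [hno.1])
      have ha1 : a i ≤ a (πb k) := by rw [hip]; exact hπb hkp
      have hb1 : b j ≤ b (πt l) := by rw [hjq]; exact hπt hql
      linarith
    · exfalso
      push_neg at hex
      have hle := two_families_width_le W hW.le
        (Finset.univ.filter (fun k : Fin n => k ≤ p))
        (Finset.univ.filter (fun l : Fin m => q ≤ l))
        (fun k => x₀ (πb k)) (fun k => w (πb k))
        (fun l => y₀ (πt l)) (fun l => v (πt l))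
        (fun k _ => hB (πb k)) (fun l _ => hT (πt l))
        (fun k _ => (hw _).le) (fun l _ => (hv _).le)
        (fun k _ k' _ hne => hBB (πb k) (πb k') (πb.injective.ne hne))
        (fun l _ l' _ hne => hTT (πt l) (πt l') (πt.injective.ne hne))
        (fun k hk l hl => hex k l
          (by simpa using hk) (by simpa using hl))
      linarith
end

section
/- Let W, OPT > 0 and 0 < μ < 1. Let B be a box of width w(B) ≥ μW and height h(B) ≥ μ·OPT, and let S be a finite set of items, each of width at most μW and height at most μ·OPT. If the Next Fit Decreasing Height algorithm applied to S in B fails to place all items of S, then the total area of the items it does place in B is at least w(B)·h(B) − μW·h(B) − 2μ·OPT·w(B); in particular, the uncovered area of B is at most μW·h(B) + 2μ·OPT·w(B) ≤ 3μ·W·OPT. -/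
open scoped Classical

/-- The state of the Next Fit Decreasing Height algorithm: current horizontal
position on the open shelf, the bottom of the open shelf, the height of the open
shelf (the height of its first = tallest item), the total area of placed items,
and whether the algorithm has stopped because the next shelf would not fit. -/
structure NFDHState where
  xpos : ℝ
  ypos : ℝ
  shelfH : ℝ
  placedArea : ℝ
  failed : Bool

/-- One step of NFDH in a box of width `Wb` and height `Hb`, processing the item
`it = (width, height)`: place it on the current shelf if it fits, otherwise open a
new shelf on top of the current one; stop if the new shelf would exceed the box. -/
noncomputable def nfdhStep (Wb Hb : ℝ) (st : NFDHState) (it : ℝ × ℝ) : NFDHState :=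
  if st.failed then st
  else if st.xpos + it.1 ≤ Wb ∧ st.ypos + it.2 ≤ Hb then
    { st with
        xpos := st.xpos + it.1
        shelfH := max st.shelfH it.2
        placedArea := st.placedArea + it.1 * it.2 }
  else if st.ypos + st.shelfH + it.2 ≤ Hb then
    { xpos := it.1
      ypos := st.ypos + st.shelfH
      shelfH := it.2
      placedArea := st.placedArea + it.1 * it.2
      failed := false }
  else
    { st with failed := true }

/-- Running NFDH on a list of items (given in order of non-increasing height). -/
noncomputable def nfdhRun (Wb Hb : ℝ) (items : List (ℝ × ℝ)) : NFDHState :=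
  items.foldl (nfdhStep Wb Hb) ⟨0, 0, 0, 0, false⟩

def NFDHInv (W OPT μ Wb Hb : ℝ) (st : NFDHState) (l : List (ℝ × ℝ)) : Prop :=
  if st.failed then
    Wb * Hb - μ * W * Hb - 2 * μ * OPT * Wb ≤ st.placedArea
  else
    0 ≤ st.xpos ∧ 0 ≤ st.ypos ∧ 0 ≤ st.shelfH ∧ st.shelfH ≤ μ * OPT ∧
    ((∀ it ∈ l, it.2 ≤ st.shelfH) ∨
      (st.xpos = 0 ∧ st.ypos = 0 ∧ st.shelfH = 0 ∧ st.placedArea = 0)) ∧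
    ∀ h : ℝ, 0 ≤ h → (∃ it ∈ l, h ≤ it.2) →
      (Wb - μ * W) * (st.ypos + st.shelfH - μ * OPT) + st.xpos * h ≤ st.placedArea

lemma nfdh_step_inv (W OPT μ Wb Hb : ℝ) (hW : 0 < W) (hOPT : 0 < OPT)
    (hμ0 : 0 < μ) (hWb : μ * W ≤ Wb) (hHb : μ * OPT ≤ Hb)
    (st : NFDHState) (x : ℝ × ℝ) (l : List (ℝ × ℝ))
    (hxpos : 0 < x.1 ∧ 0 < x.2) (hxsize : x.1 ≤ μ * W ∧ x.2 ≤ μ * OPT)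
    (hsorted : ∀ it ∈ l, it.2 ≤ x.2)
    (hinv : NFDHInv W OPT μ Wb Hb st (x :: l)) :
    NFDHInv W OPT μ Wb Hb (nfdhStep Wb Hb st x) l := by
  by_cases hf : st.failed
  · simp only [nfdhStep, hf, if_true]
    simpa [NFDHInv, hf] using hinv
  · simp only [NFDHInv, hf, if_false] at hinv
    obtain ⟨hx0, hy0, hs0, hsμ, hshelf, harea⟩ := hinv
    by_cases hfit : st.xpos + x.1 ≤ Wb ∧ st.ypos + x.2 ≤ Hb
    · have hstep : nfdhStep Wb Hb st x =
        { st with xpos := st.xpos + x.1, shelfH := max st.shelfH x.2, placedArea := st.placedArea + x.1 * x.2 } := by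
        rw [nfdhStep, if_neg hf, if_pos hfit]
      rw [hstep]
      simp only [NFDHInv, hf, if_false, Bool.false_eq_true]
      refine ⟨by linarith [hxpos.1], hy0, le_max_of_le_left hs0,
        max_le hsμ hxsize.2, ?_, ?_⟩
      · left; intro it hit; exact le_max_of_le_right (hsorted it hit)
      · intro h hh0 ⟨it, hit, hhit⟩
        have hhx2 : h ≤ x.2 := le_trans hhit (hsorted it hit)
        have hx1h : x.1 * h ≤ x.1 * x.2 :=
          mul_le_mul_of_nonneg_left hhx2 (le_of_lt hxpos.1)
        rcases hshelf with hsh | ⟨he1, he2, he3, he4⟩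
        · have hmax : max st.shelfH x.2 = st.shelfH :=
            max_eq_left (hsh x (List.mem_cons_self))
          rw [hmax]
          have := harea h hh0 ⟨it, List.mem_cons_of_mem x hit, hhit⟩
          nlinarith
        · rw [he1, he2, he3, he4]
          have hmax : max (0:ℝ) x.2 = x.2 := max_eq_right (le_of_lt hxpos.2)
          rw [hmax]
          have h1 : (Wb - μ * W) * (0 + x.2 - μ * OPT) ≤ 0 := by
            apply mul_nonpos_of_nonneg_of_nonpos <;> nlinarith [hxsize.2]
          nlinarith
    · by_cases hnew : st.ypos + st.shelfH + x.2 ≤ Hb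
      · have hstep : nfdhStep Wb Hb st x =
          { xpos := x.1, ypos := st.ypos + st.shelfH, shelfH := x.2,
            placedArea := st.placedArea + x.1 * x.2, failed := false } := by
          rw [nfdhStep, if_neg hf, if_neg hfit, if_pos hnew]
        rw [hstep]
        -- vertical fit held, so horizontal failed
        have hvert : st.ypos + x.2 ≤ Hb := by linarith
        have hhor : Wb < st.xpos + x.1 := by
          by_contra hc
          push_neg at hc
          exact hfit ⟨hc, hvert⟩
        have hxw : Wb - μ * W ≤ st.xpos := by nlinarith [hxsize.1]
        -- shelf is nonempty: rule out initial case
        have hshelf' : x.2 ≤ st.shelfH := by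
          rcases hshelf with hsh | ⟨he1, he2, he3, he4⟩
          · exact hsh x (List.mem_cons_self)
          · exfalso; rw [he1] at hhor; nlinarith [hxsize.1]
        simp only [NFDHInv, if_false, Bool.false_eq_true]
        refine ⟨le_of_lt hxpos.1, by linarith, le_of_lt hxpos.2, hxsize.2,
          Or.inl hsorted, ?_⟩
        intro h hh0 ⟨it, hit, hhit⟩
        have hhx2 : h ≤ x.2 := le_trans hhit (hsorted it hit)
        have hkey := harea x.2 (le_of_lt hxpos.2)
          ⟨x, List.mem_cons_self, le_refl _⟩
        have hx1h : x.1 * h ≤ x.1 * x.2 :=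
          mul_le_mul_of_nonneg_left hhx2 (le_of_lt hxpos.1)
        have hxp : (Wb - μ * W) * x.2 ≤ st.xpos * x.2 :=
          mul_le_mul_of_nonneg_right hxw (le_of_lt hxpos.2)
        nlinarith
      · have hstep : nfdhStep Wb Hb st x = { st with failed := true } := by
          rw [nfdhStep, if_neg hf, if_neg hfit, if_neg hnew]
        rw [hstep]
        simp only [NFDHInv, if_true]
        have hkey := harea x.2 (le_of_lt hxpos.2)
          ⟨x, List.mem_cons_self, le_refl _⟩
        have hys : Hb - μ * OPT ≤ st.ypos + st.shelfH := by
          push_neg at hnew; nlinarith [hxsize.2]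
        have hWbμ : 0 ≤ Wb - μ * W := by linarith
        have hxx : 0 ≤ st.xpos * x.2 := mul_nonneg hx0 (le_of_lt hxpos.2)
        have h2 : (0:ℝ) ≤ μ * OPT * (μ * W) :=
          mul_nonneg (mul_nonneg hμ0.le hOPT.le) (mul_nonneg hμ0.le hW.le)
        nlinarith [mul_le_mul_of_nonneg_left hys hWbμ]

lemma nfdh_run_inv (W OPT μ Wb Hb : ℝ) (hW : 0 < W) (hOPT : 0 < OPT)
    (hμ0 : 0 < μ) (hWb : μ * W ≤ Wb) (hHb : μ * OPT ≤ Hb) :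
    ∀ (l : List (ℝ × ℝ)) (st : NFDHState),
      (∀ it ∈ l, 0 < it.1 ∧ 0 < it.2) → (∀ it ∈ l, it.1 ≤ μ * W ∧ it.2 ≤ μ * OPT) →
      List.Pairwise (fun p q : ℝ × ℝ => q.2 ≤ p.2) l →
      NFDHInv W OPT μ Wb Hb st l →
      NFDHInv W OPT μ Wb Hb (l.foldl (nfdhStep Wb Hb) st) [] := by
  intro l
  induction l with
  | nil => intro st _ _ _ h; exact h
  | cons x l ih =>
    intro st hpos hsize hsorted hinv
    rw [List.pairwise_cons] at hsorted
    simp only [List.foldl_cons]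
    exact ih _ (fun it hit => hpos it (List.mem_cons_of_mem x hit))
      (fun it hit => hsize it (List.mem_cons_of_mem x hit)) hsorted.2
      (nfdh_step_inv W OPT μ Wb Hb hW hOPT hμ0 hWb hHb st x l
        (hpos x (List.mem_cons_self)) (hsize x (List.mem_cons_self))
        hsorted.1 hinv)

/-- **Area guarantee of NFDH.** If NFDH in a box of width `Wb ≥ μW` and height
`Hb ≥ μ·OPT` fails to place all items (each of width `≤ μW` and height `≤ μ·OPT`),
then the placed area is at least `Wb·Hb − μW·Hb − 2μ·OPT·Wb`; in particular, the
uncovered area is at most `μW·Hb + 2μ·OPT·Wb ≤ 3μ·W·OPT`. -/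
theorem nfdh_area_bound
    (W OPT μ Wb Hb : ℝ) (hW : 0 < W) (hOPT : 0 < OPT) (hμ0 : 0 < μ) (hμ1 : μ < 1)
    (hWb : μ * W ≤ Wb) (hHb : μ * OPT ≤ Hb) (hWbW : Wb ≤ W) (hHbOPT : Hb ≤ OPT)
    (items : List (ℝ × ℝ))
    (hpos : ∀ it ∈ items, 0 < it.1 ∧ 0 < it.2)
    (hsize : ∀ it ∈ items, it.1 ≤ μ * W ∧ it.2 ≤ μ * OPT)
    (hsorted : List.Pairwise (fun p q : ℝ × ℝ => q.2 ≤ p.2) items)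
    (hfail : (nfdhRun Wb Hb items).failed = true) :
    Wb * Hb - μ * W * Hb - 2 * μ * OPT * Wb ≤ (nfdhRun Wb Hb items).placedArea ∧
    Wb * Hb - (nfdhRun Wb Hb items).placedArea ≤ μ * W * Hb + 2 * μ * OPT * Wb ∧
    μ * W * Hb + 2 * μ * OPT * Wb ≤ 3 * μ * W * OPT := by
  have hinv0 : NFDHInv W OPT μ Wb Hb ⟨0, 0, 0, 0, false⟩ items := by
    simp only [NFDHInv, if_false, Bool.false_eq_true]
    refine ⟨le_refl 0, le_refl 0, le_refl 0, by nlinarith, Or.inr ⟨by trivial, by trivial, by trivial, by trivial⟩, ?_⟩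
    intro h hh0 _
    have h0 : (0:ℝ) ≤ Wb - μ * W := by linarith
    have h1 : (Wb - μ * W) * (0 + 0 - μ * OPT) ≤ 0 :=
      mul_nonpos_of_nonneg_of_nonpos h0 (by nlinarith)
    linarith
  have hfin := nfdh_run_inv W OPT μ Wb Hb hW hOPT hμ0 hWb hHb items
    ⟨0, 0, 0, 0, false⟩ hpos hsize hsorted hinv0
  rw [show (nfdhRun Wb Hb items) = items.foldl (nfdhStep Wb Hb) ⟨0, 0, 0, 0, false⟩ from rfl] at hfail ⊢
  rw [NFDHInv, if_pos hfail] at hfin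
  have h3 : μ * W * Hb + 2 * μ * OPT * Wb ≤ 3 * μ * W * OPT := by
    nlinarith [mul_le_mul_of_nonneg_left hHbOPT (mul_nonneg hμ0.le hW.le),
      mul_le_mul_of_nonneg_left hWbW (mul_nonneg hμ0.le hOPT.le)]
  exact ⟨hfin, by linarith, h3⟩
end
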